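/- arXiv:2106.13430 — 7 statements merged into one kernel-verified Lean document; each statement's English description precedes it below -/
import Mathlib

section
/- Let μ be the standard Gaussian measure N(0,1) on ℝ and let ρ be a real number with -1 ≤ ρ ≤ 1. Then the integral over ℝ² (with respect to the product measure μ × μ) of the function (x,y) ↦ max(x,0) · max(ρ·x + √(1 - ρ²)·y, 0) equals (√(1 - ρ²) + ρ·(π - arccos ρ))/(2π). -/
open Real MeasureTheory ProbabilityTheory
open Set
open scoped NNReal ENNReal

lemma max_mul_zero {r x : ℝ} (hr : 0 ≤ r) : max (r * x) 0 = r * max x 0 := by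
  rcases le_or_gt x 0 with h | h
  · rw [max_eq_right (mul_nonpos_of_nonneg_of_nonpos hr h), max_eq_right h, mul_zero]
  · rw [max_eq_left (mul_nonneg hr h.le), max_eq_left h.le]

lemma gauss_prod_density :
    (gaussianReal 0 1).prod (gaussianReal 0 1)
      = (volume.prod volume).withDensity
          (fun p => gaussianPDF 0 1 p.1 * gaussianPDF 0 1 p.2) := by
  refine Measure.prod_eq fun s t hs ht => ?_
  rw [withDensity_apply _ (hs.prod ht), ← Measure.prod_restrict,
    lintegral_prod_mul ((measurable_gaussianPDF 0 1).aemeasurable)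
      ((measurable_gaussianPDF 0 1).aemeasurable),
    gaussianReal_apply 0 one_ne_zero, gaussianReal_apply 0 one_ne_zero]

-- radial integral
lemma radial_integral : ∫ r in Ioi (0:ℝ), r ^ 3 * Real.exp (-(r ^ 2) / 2) = 2 := by
  have hderiv : ∀ x ∈ Ici (0:ℝ),
      HasDerivAt (fun r : ℝ => -(r ^ 2 + 2) * Real.exp (-(r ^ 2) / 2))
        (x ^ 3 * Real.exp (-(x ^ 2) / 2)) x := by
    intro x _
    have h1 : HasDerivAt (fun r : ℝ => -(r ^ 2 + 2)) (-(2 * x)) x := by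
      refine ((hasDerivAt_pow 2 x).add_const 2).neg.congr_deriv (Eq.symm ?_)
      norm_num
    have h2 : HasDerivAt (fun r : ℝ => Real.exp (-(r ^ 2) / 2)) (-x * Real.exp (-(x ^ 2) / 2)) x := by
      have h3 : HasDerivAt (fun r : ℝ => -(r ^ 2) / 2) (-x) x := by
        have := ((hasDerivAt_pow 2 x).neg.div_const 2)
        norm_num at this
        refine this.congr_deriv (Eq.symm ?_)
        ring
      simpa [mul_comm] using h3.exp
    have := h1.mul h2
    refine this.congr_deriv (Eq.symm ?_)
    ring
  have hint : IntegrableOn (fun r : ℝ => r ^ 3 * Real.exp (-(r ^ 2) / 2)) (Ioi 0) := by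
    have := integrableOn_rpow_mul_exp_neg_mul_sq (b := 1/2) (by norm_num) (s := 3) (by norm_num)
    refine this.congr_fun (fun x hx => ?_) measurableSet_Ioi
    beta_reduce
    rw [show ((3:ℝ)) = ((3:ℕ):ℝ) by norm_num, Real.rpow_natCast]
    ring_nf
  have htend : Filter.Tendsto (fun r : ℝ => -(r ^ 2 + 2) * Real.exp (-(r ^ 2) / 2))
      Filter.atTop (nhds 0) := by
    have h0 : Filter.Tendsto (fun u : ℝ => -(2 * u + 2) * Real.exp (-u)) Filter.atTop (nhds 0) := by
      have t1 := Real.tendsto_pow_mul_exp_neg_atTop_nhds_zero 1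
      have t0 := Real.tendsto_pow_mul_exp_neg_atTop_nhds_zero 0
      have := ((t1.const_mul (-2)).sub (t0.const_mul 2))
      simpa [mul_comm, mul_assoc, sub_eq_add_neg, neg_add, neg_mul, add_mul] using this.congr
        (fun x => by ring)
    have hcomp : Filter.Tendsto (fun r : ℝ => r ^ 2 / 2) Filter.atTop Filter.atTop :=
      (Filter.tendsto_pow_atTop two_ne_zero).atTop_div_const (by norm_num)
    have := h0.comp hcomp
    refine this.congr fun r => ?_
    simp only [Function.comp]
    ring_nf
  have := integral_Ioi_of_hasDerivAt_of_tendsto' hderiv hint htend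
  rw [this]
  norm_num

lemma angular_integral {α : ℝ} (h0 : 0 ≤ α) (hπ : α ≤ π) :
    ∫ θ in Ioo (-π) π, max (Real.cos θ) 0 * max (Real.cos (θ - α)) 0
      = ((π - α) * Real.cos α + Real.sin α) / 2 := by
  have hpi := Real.pi_pos
  have heq : EqOn (fun θ => max (Real.cos θ) 0 * max (Real.cos (θ - α)) 0)
      ((Ioo (α - π/2) (π/2)).indicator (fun θ => Real.cos θ * Real.cos (θ - α)))
      (Ioo (-π) π) := by
    intro θ hθ
    obtain ⟨hθ1, hθ2⟩ := hθ
    by_cases hmem : θ ∈ Ioo (α - π/2) (π/2)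
    · rw [indicator_of_mem hmem]
      obtain ⟨hm1, hm2⟩ := hmem
      have hc1 : 0 < Real.cos θ :=
        Real.cos_pos_of_mem_Ioo ⟨by linarith, hm2⟩
      have hc2 : 0 < Real.cos (θ - α) :=
        Real.cos_pos_of_mem_Ioo ⟨by linarith, by linarith⟩
      simp [max_eq_left hc1.le, max_eq_left hc2.le]
    · rw [indicator_of_notMem hmem]
      rw [mem_Ioo, not_and_or, not_lt, not_lt] at hmem
      rcases hmem with hle | hge
      · -- θ ≤ α - π/2
        rcases le_or_gt θ (-(π/2)) with hh | hh
        · have : Real.cos θ ≤ 0 := by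
            rw [← Real.cos_neg]
            exact Real.cos_nonpos_of_pi_div_two_le_of_le (by linarith) (by linarith)
          simp [max_eq_right this]
        · have : Real.cos (θ - α) ≤ 0 := by
            rw [← Real.cos_neg, neg_sub]
            exact Real.cos_nonpos_of_pi_div_two_le_of_le (by linarith) (by linarith)
          simp [max_eq_right this]
      · -- π/2 ≤ θ
        have : Real.cos θ ≤ 0 :=
          Real.cos_nonpos_of_pi_div_two_le_of_le hge (by linarith)
        simp [max_eq_right this]
  rw [setIntegral_congr_fun measurableSet_Ioo heq, setIntegral_indicator measurableSet_Ioo,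
    inter_eq_self_of_subset_right (Ioo_subset_Ioo (by linarith) (by linarith)),
    ← integral_Ioc_eq_integral_Ioo,
    ← intervalIntegral.integral_of_le (by linarith : α - π/2 ≤ π/2)]
  have hF : ∀ θ : ℝ, HasDerivAt (fun t : ℝ => t * Real.cos α / 2 + Real.sin (2*t - α) / 4)
      (Real.cos θ * Real.cos (θ - α)) θ := by
    intro θ
    have h1 : HasDerivAt (fun t : ℝ => t * Real.cos α / 2) (Real.cos α / 2) θ := by
      simpa using ((hasDerivAt_id θ).mul_const (Real.cos α)).div_const 2
    have h2 : HasDerivAt (fun t : ℝ => Real.sin (2*t - α) / 4) (Real.cos (2*θ - α) / 2) θ := by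
      have hin : HasDerivAt (fun t : ℝ => 2*t - α) 2 θ := by
        simpa using ((hasDerivAt_id θ).const_mul 2).sub_const α
      have := hin.sin.div_const 4
      refine this.congr_deriv (Eq.symm ?_)
      ring
    have := h1.add h2
    refine this.congr_deriv (Eq.symm ?_)
    have hexp : 2*θ - α = θ + (θ - α) := by ring
    rw [hexp, Real.cos_add, Real.cos_sub, Real.sin_sub]
    linear_combination (Real.cos α / 2) * (Real.sin_sq_add_cos_sq θ)
  rw [intervalIntegral.integral_eq_sub_of_hasDerivAt (fun x _ => hF x)
    ((Real.continuous_cos.mul (Real.continuous_cos.comp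
      (continuous_id.sub continuous_const))).intervalIntegrable _ _)]
  have e1 : 2 * (π/2) - α = π - α := by ring
  have e2 : 2 * (α - π/2) - α = α - π := by ring
  rw [e1, e2, show π - α = -(α - π) by ring, Real.sin_neg]
  rw [Real.sin_sub_pi]
  ring

theorem stmt_5 (ρ : ℝ) (h1 : -1 ≤ ρ) (h2 : ρ ≤ 1) :
    ∫ p : ℝ × ℝ,
        max p.1 0 * max (ρ * p.1 + Real.sqrt (1 - ρ ^ 2) * p.2) 0
        ∂((gaussianReal 0 1).prod (gaussianReal 0 1))
      = (Real.sqrt (1 - ρ ^ 2) + ρ * (π - Real.arccos ρ)) / (2 * π) := by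
  set α := Real.arccos ρ with hα
  set s := Real.sqrt (1 - ρ ^ 2) with hs
  have hρ : Real.cos α = ρ := Real.cos_arccos h1 h2
  have hsin : Real.sin α = s := Real.sin_arccos ρ
  have hα0 : 0 ≤ α := Real.arccos_nonneg ρ
  have hαπ : α ≤ π := Real.arccos_le_pi ρ
  set f : ℝ × ℝ → ℝ := fun q =>
    max q.1 0 * max (ρ * q.1 + s * q.2) 0
      * (gaussianPDFReal 0 1 q.1 * gaussianPDFReal 0 1 q.2) with hf
  have hpdf : ∀ x : ℝ, gaussianPDFReal 0 1 x = (Real.sqrt (2 * π))⁻¹ * Real.exp (-(x ^ 2) / 2) := by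
    intro x
    simp [gaussianPDFReal]
  -- Step 1: reduce to a Lebesgue integral
  have step1 : ∫ p : ℝ × ℝ,
      max p.1 0 * max (ρ * p.1 + s * p.2) 0
        ∂((gaussianReal 0 1).prod (gaussianReal 0 1))
      = ∫ p : ℝ × ℝ, f p ∂(volume.prod volume) := by
    rw [gauss_prod_density]
    set D : ℝ × ℝ → ℝ≥0 :=
      fun q => (gaussianPDFReal 0 1 q.1 * gaussianPDFReal 0 1 q.2).toNNReal with hD
    have hDmeas : Measurable D :=
      ((measurable_gaussianPDFReal 0 1).comp measurable_fst |>.mul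
        ((measurable_gaussianPDFReal 0 1).comp measurable_snd)).real_toNNReal
    have hd : (fun p : ℝ × ℝ => gaussianPDF 0 1 p.1 * gaussianPDF 0 1 p.2)
        = fun p : ℝ × ℝ => (D p : ℝ≥0∞) := by
      funext p
      simp only [gaussianPDF_def]
      rw [← ENNReal.ofReal_mul (gaussianPDFReal_nonneg _ _ _)]
      rfl
    rw [hd, integral_withDensity_eq_integral_smul hDmeas]
    congr 1
    funext p
    rw [NNReal.smul_def, smul_eq_mul, hD,
      Real.coe_toNNReal _ (mul_nonneg (gaussianPDFReal_nonneg _ _ _) (gaussianPDFReal_nonneg _ _ _))]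
    simp only [hf]
    ring
  rw [step1, ← Measure.volume_eq_prod]
  -- Step 2: polar coordinates
  rw [← integral_comp_polarCoord_symm f]
  have step2 : ∫ p in polarCoord.target, p.1 • f (polarCoord.symm p)
      = (∫ r in Ioi (0:ℝ), r ^ 3 * Real.exp (-(r ^ 2) / 2))
        * ∫ θ in Ioo (-π) π, (2 * π)⁻¹ * (max (Real.cos θ) 0 * max (Real.cos (θ - α)) 0) := by
    rw [polarCoord_target, ← setIntegral_prod_mul]
    refine setIntegral_congr_fun (measurableSet_Ioi.prod measurableSet_Ioo) ?_
    rintro ⟨r, θ⟩ ⟨hr, -⟩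
    simp only [polarCoord_symm_apply, hf]
    have hr' : (0:ℝ) ≤ r := le_of_lt hr
    rw [hpdf, hpdf]
    have h2' : ρ * (r * Real.cos θ) + s * (r * Real.sin θ) = r * Real.cos (θ - α) := by
      rw [Real.cos_sub, hρ, hsin]; ring
    have h3' : Real.exp (-((r * Real.cos θ) ^ 2) / 2) * Real.exp (-((r * Real.sin θ) ^ 2) / 2)
        = Real.exp (-(r ^ 2) / 2) := by
      rw [← Real.exp_add]
      congr 1
      nlinarith [Real.sin_sq_add_cos_sq θ]
    have h4' : (Real.sqrt (2 * π))⁻¹ * (Real.sqrt (2 * π))⁻¹ = (2 * π)⁻¹ := by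
      rw [← mul_inv, Real.mul_self_sqrt (by positivity)]
    rw [h2', max_mul_zero hr', max_mul_zero hr']
    simp only [smul_eq_mul]
    calc r * (r * max (Real.cos θ) 0 * (r * max (Real.cos (θ - α)) 0)
          * ((Real.sqrt (2 * π))⁻¹ * Real.exp (-((r * Real.cos θ) ^ 2) / 2)
            * ((Real.sqrt (2 * π))⁻¹ * Real.exp (-((r * Real.sin θ) ^ 2) / 2))))
        = r ^ 3 * (max (Real.cos θ) 0 * max (Real.cos (θ - α)) 0)
          * ((Real.sqrt (2 * π))⁻¹ * (Real.sqrt (2 * π))⁻¹)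
          * (Real.exp (-((r * Real.cos θ) ^ 2) / 2) * Real.exp (-((r * Real.sin θ) ^ 2) / 2)) := by
          ring
      _ = r ^ 3 * Real.exp (-(r ^ 2) / 2)
          * ((2 * π)⁻¹ * (max (Real.cos θ) 0 * max (Real.cos (θ - α)) 0)) := by
          rw [h3', h4']; ring
  rw [step2, integral_const_mul, radial_integral, angular_integral hα0 hαπ, hρ, hsin]
  have hπ0 : (π : ℝ) ≠ 0 := Real.pi_ne_zero
  field_simp
  ring
end

section
/- Let A be an n × n real positive definite matrix, let Φ be an n × d real matrix, let c > 0 be a real number, and suppose that A - c · Φ Φᵀ is positive semidefinite. Then for every β ∈ ℝᵈ, writing y = Φ β, one has yᵀ A⁻¹ y ≤ ‖β‖² / c, where ‖β‖ is the Euclidean norm of β. -/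
open Matrix

theorem stmt_11 (n d : ℕ) (A : Matrix (Fin n) (Fin n) ℝ) (hA : A.PosDef)
    (Φ : Matrix (Fin n) (Fin d) ℝ) (c : ℝ) (hc : 0 < c)
    (hdom : (A - c • (Φ * Φ.transpose)).PosSemidef)
    (β : EuclideanSpace ℝ (Fin d)) :
    (Φ *ᵥ β) ⬝ᵥ A⁻¹ *ᵥ (Φ *ᵥ β) ≤ ‖β‖ ^ 2 / c := by
  set y : Fin n → ℝ := Φ *ᵥ β with hy
  set x : Fin n → ℝ := A⁻¹ *ᵥ y with hx
  have hdet : IsUnit A.det := isUnit_iff_ne_zero.mpr hA.det_pos.ne'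
  have hAx : A *ᵥ x = y := by
    rw [hx, mulVec_mulVec, Matrix.mul_nonsing_inv A hdet, one_mulVec]
  set u : Fin d → ℝ := Φ.transpose *ᵥ x with hu
  set t : ℝ := y ⬝ᵥ A⁻¹ *ᵥ y with ht
  have htx : t = x ⬝ᵥ y := by rw [ht, hx, dotProduct_comm]
  have hxAx : x ⬝ᵥ A *ᵥ x = t := by rw [hAx, htx]
  have ht0 : 0 ≤ t := by simpa using hA.inv.posSemidef.dotProduct_mulVec_nonneg y
  have hquad : 0 ≤ x ⬝ᵥ (A - c • (Φ * Φ.transpose)) *ᵥ x := by simpa only [star_trivial] using hdom.dotProduct_mulVec_nonneg x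
  have hPhi : x ⬝ᵥ (Φ * Φ.transpose) *ᵥ x = u ⬝ᵥ u := by
    rw [← mulVec_mulVec, dotProduct_mulVec, hu, mulVec_transpose]
  have hdom' : c * (u ⬝ᵥ u) ≤ t := by
    have := hquad
    rw [sub_mulVec, dotProduct_sub, smul_mulVec, dotProduct_smul, hxAx, hPhi] at this
    simpa using sub_nonneg.mp this
  have htu : t = u ⬝ᵥ β := by
    rw [htx, hu, mulVec_transpose, ← dotProduct_mulVec]
  have hCS : t ^ 2 ≤ (u ⬝ᵥ u) * (β ⬝ᵥ β) := by
    have h := real_inner_mul_inner_self_le (F := EuclideanSpace ℝ (Fin d)) (WithLp.toLp 2 u) β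
    simp only [PiLp.inner_apply, RCLike.inner_apply, conj_trivial, PiLp.toLp_apply] at h
    rw [htu]
    simp only [dotProduct]
    ring_nf at h ⊢
    rw [show ∑ x, β.ofLp x * u x = ∑ x, u x * β.ofLp x from Finset.sum_congr rfl fun i _ => mul_comm _ _] at h
    nlinarith [h]
  have hnorm : ‖β‖ ^ 2 = β ⬝ᵥ β := by
    rw [EuclideanSpace.real_norm_sq_eq]
    simp [dotProduct, sq]
  have hb0 : 0 ≤ β ⬝ᵥ β := by rw [← hnorm]; positivity
  have hu0 : 0 ≤ u ⬝ᵥ u := Finset.sum_nonneg fun i _ => mul_self_nonneg _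
  rw [hnorm, le_div_iff₀ hc]
  nlinarith [hdom', hCS, ht0, hb0, hu0, mul_le_mul_of_nonneg_right hdom' hb0,
    mul_le_mul_of_nonneg_left hCS hc.le]
end

section
/- Let h_1, …, h_n ∈ ℝᵈ be unit vectors (‖h_i‖ = 1 for all i). Then the n × n real matrix with entries arcsin(⟨h_i, h_j⟩) is positive semidefinite, where ⟨·,·⟩ denotes the Euclidean inner product and arcsin the real inverse sine function on [-1,1]. -/
open Matrix Real Set

namespace Arcsin13


noncomputable def b (k : ℕ) : ℝ := (Nat.centralBinom k : ℝ) / 4 ^ k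

lemma b_nonneg (k : ℕ) : 0 ≤ b k := div_nonneg (Nat.cast_nonneg _) (by positivity)

lemma b_le_one (k : ℕ) : b k ≤ 1 := by
  rw [b, div_le_one (by positivity)]
  have h1 : Nat.centralBinom k ≤ 4 ^ k := by
    have h2 : (2*k).choose k ≤ 2 ^ (2*k) := by
      calc (2*k).choose k ≤ ∑ i ∈ Finset.range (2*k+1), (2*k).choose i :=
            Finset.single_le_sum (fun i _ => Nat.zero_le _) (Finset.mem_range.2 (by omega))
        _ = 2 ^ (2*k) := Nat.sum_range_choose (2*k)
    calc Nat.centralBinom k = (2*k).choose k := rfl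
      _ ≤ 2^(2*k) := h2
      _ = 4^k := by rw [pow_mul]; norm_num
  exact_mod_cast h1

lemma b_succ (k : ℕ) : 2 * ((k:ℝ)+1) * b (k+1) = (2*(k:ℝ)+1) * b k := by
  have h : ((k:ℝ)+1) * (Nat.centralBinom (k+1) : ℝ) = 2*(2*(k:ℝ)+1) * (Nat.centralBinom k : ℝ) := by
    exact_mod_cast congrArg (Nat.cast (R := ℝ)) (Nat.succ_mul_centralBinom_succ k)
  rw [b, b]
  have h4 : (4:ℝ)^(k+1) = 4 * 4^k := by ring
  field_simp [h4]
  linear_combination (2 * (4:ℝ)^k) * h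

lemma summable_b {r : ℝ} (hr : |r| < 1) : Summable (fun k => b k * r ^ k) := by
  refine Summable.of_norm_bounded (g := fun k => |r|^k)
    (summable_geometric_of_lt_one (abs_nonneg r) hr) (fun k => ?_)
  rw [norm_mul, norm_pow, Real.norm_eq_abs, Real.norm_eq_abs,
    abs_of_nonneg (b_nonneg k)]
  calc b k * |r|^k ≤ 1 * |r|^k := by gcongr; exact b_le_one k
    _ = |r|^k := one_mul _

noncomputable def G (x : ℝ) : ℝ := ∑' k, b k * x ^ k

noncomputable def D (x : ℝ) : ℝ := ∑' k : ℕ, ((k:ℝ)+1) * b (k+1) * x ^ k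

lemma G_zero : G 0 = 1 := by
  rw [G, tsum_eq_single 0 (fun k hk => by simp [zero_pow hk])]
  simp [b, Nat.centralBinom]



lemma bound1 (k : ℕ) (c u : ℝ) (hcu : |c| ≤ u) : |(k:ℝ) * b k * c| ≤ (k:ℝ) * u ^ 1 * u ^ (0:ℕ) → True := fun _ => trivial

lemma summable_D {x : ℝ} (hx : |x| < 1) : Summable (fun k : ℕ => ((k:ℝ)+1) * b (k+1) * x ^ k) := by
  have h1 : Summable (fun k : ℕ => ((k:ℝ)+1) * |x| ^ k) := by
    have h2 := summable_pow_mul_geometric_of_norm_lt_one 1 (by rwa [Real.norm_eq_abs, abs_abs] : ‖|x|‖ < 1)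
    have h3 := summable_geometric_of_lt_one (abs_nonneg x) hx
    exact (h2.add h3).congr (fun k => by push_cast; ring)
  refine Summable.of_norm_bounded h1 (fun k => ?_)
  rw [Real.norm_eq_abs, abs_mul, abs_mul, abs_pow,
    abs_of_nonneg (show (0:ℝ) ≤ (k:ℝ)+1 by positivity), abs_of_nonneg (b_nonneg _)]
  calc ((k:ℝ)+1) * b (k+1) * |x| ^ k ≤ ((k:ℝ)+1) * 1 * |x| ^ k := by
        gcongr
        exact b_le_one _
    _ = ((k:ℝ)+1) * |x| ^ k := by ring

lemma G_hasDeriv {x : ℝ} (hx : |x| < 1) : HasDerivAt G (D x) x := by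
  set r : ℝ := (|x| + 1) / 2 with hr
  have hr0 : 0 < r := by positivity
  have hr1 : r < 1 := by rw [hr]; linarith
  have hxr : |x| < r := by rw [hr]; linarith
  have hrn : ‖r‖ < 1 := by rwa [Real.norm_eq_abs, abs_of_pos hr0]
  have hu : Summable (fun k : ℕ => (k:ℝ) * r ^ (k-1)) := by
    have h2 := summable_pow_mul_geometric_of_norm_lt_one 1 hrn
    refine (h2.mul_left (1/r)).congr (fun k => ?_)
    cases k with
    | zero => simp
    | succ m =>
      field_simp
      rw [pow_succ]
      push_cast
      ring
  have bnd : ∀ (k : ℕ) (z : ℝ), |z| ≤ r → |(k:ℝ) * b k * z ^ (k-1)| ≤ (k:ℝ) * r ^ (k-1) := by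
    intro k z hz
    rw [abs_mul, abs_mul, abs_pow, abs_of_nonneg (Nat.cast_nonneg k), abs_of_nonneg (b_nonneg _)]
    calc (k:ℝ) * b k * |z| ^ (k-1) ≤ (k:ℝ) * 1 * r ^ (k-1) := by
          gcongr
          exact b_le_one _
      _ = (k:ℝ) * r ^ (k-1) := by ring
  have key : HasDerivAt (fun z => ∑' k : ℕ, b k * z ^ k)
      (∑' k : ℕ, (k:ℝ) * b k * x ^ (k-1)) x :=
    hasDerivAt_tsum_of_isPreconnected (u := fun k : ℕ => (k:ℝ) * r ^ (k-1))
      (g := fun (k : ℕ) (z : ℝ) => b k * z ^ k)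
      (g' := fun (k : ℕ) (z : ℝ) => (k:ℝ) * b k * z ^ (k-1))
      (t := Metric.ball (0:ℝ) r) (y₀ := 0) (y := x)
      hu Metric.isOpen_ball (convex_ball 0 r).isPreconnected
      (fun k z _ => by
        simpa [mul_comm, mul_assoc, mul_left_comm] using (hasDerivAt_pow k z).const_mul (b k))
      (fun k z hz => by
        rw [mem_ball_zero_iff, Real.norm_eq_abs] at hz
        exact bnd k z hz.le)
      (by rw [mem_ball_zero_iff]; simpa using hr0)
      (summable_b (by simp : |(0:ℝ)| < 1))
      (by rwa [mem_ball_zero_iff, Real.norm_eq_abs])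
  have hs : Summable (fun k : ℕ => (k:ℝ) * b k * x ^ (k-1)) :=
    Summable.of_norm_bounded hu (fun k => by rw [Real.norm_eq_abs]; exact bnd k x hxr.le)
  have heq : (∑' k : ℕ, (k:ℝ) * b k * x ^ (k-1)) = D x := by
    rw [hs.tsum_eq_zero_add]
    simp only [Nat.cast_zero, zero_mul, zero_add, D]
    congr 1
    ext k
    push_cast
    ring_nf
  rw [heq] at key
  exact key


lemma summable_lin {x : ℝ} (hx : |x| < 1) (c e : ℝ) :
    Summable (fun k : ℕ => (c*(k:ℝ)+e) * b k * x ^ k) := by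
  have h2 := summable_pow_mul_geometric_of_norm_lt_one 1 (by rwa [Real.norm_eq_abs, abs_abs] : ‖|x|‖ < 1)
  have h3 := summable_geometric_of_lt_one (abs_nonneg x) hx
  have hbound : Summable (fun k : ℕ => (|c| * (k:ℝ) + |e|) * |x| ^ k) :=
    ((h2.mul_left |c|).add (h3.mul_left |e|)).congr (fun k => by push_cast; ring)
  refine Summable.of_norm_bounded hbound (fun k => ?_)
  rw [Real.norm_eq_abs, abs_mul, abs_mul, abs_pow]
  have : |c * (k:ℝ) + e| ≤ |c| * (k:ℝ) + |e| := by
    calc |c * (k:ℝ) + e| ≤ |c * (k:ℝ)| + |e| := abs_add_le _ _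
      _ = |c| * (k:ℝ) + |e| := by rw [abs_mul, Nat.abs_cast]
  calc |c * (k:ℝ) + e| * |b k| * |x| ^ k ≤ (|c| * (k:ℝ) + |e|) * 1 * |x| ^ k := by
        gcongr
        · rw [abs_of_nonneg (b_nonneg _)]; exact b_le_one _
    _ = (|c| * (k:ℝ) + |e|) * |x| ^ k := by ring

lemma D_eq {x : ℝ} (hx : |x| < 1) : 2 * (1-x) * D x = G x := by
  have hT : Summable (fun k : ℕ => (2*(k:ℝ)+1) * b k * x ^ k) := summable_lin hx 2 1
  have hW : Summable (fun k : ℕ => 2*(k:ℝ) * b k * x ^ k) :=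
    (summable_lin hx 2 0).congr (fun k => by ring)
  have c3 : 2 * D x = ∑' k : ℕ, (2*(k:ℝ)+1) * b k * x ^ k := by
    rw [D, ← tsum_mul_left]
    exact tsum_congr fun k => by rw [← mul_assoc, ← mul_assoc, b_succ k]
  have c2 : 2 * x * D x = ∑' k : ℕ, 2*(k:ℝ) * b k * x ^ k := by
    rw [hW.tsum_eq_zero_add]
    simp only [Nat.cast_zero, mul_zero, zero_mul, zero_add]
    rw [D, ← tsum_mul_left]
    refine (tsum_congr fun k => ?_).symm
    push_cast
    rw [pow_succ]
    ring
  have : 2 * D x - 2 * x * D x = G x := by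
    rw [c3, c2, ← hT.tsum_sub hW]
    exact tsum_congr fun k => by ring
  linarith [this]

lemma G_ge_one {x : ℝ} (hx0 : 0 ≤ x) (hx : x < 1) : 1 ≤ G x := by
  have hs := summable_b (by rwa [abs_of_nonneg hx0] : |x| < 1)
  have h0 : b 0 * x ^ 0 = 1 := by simp [b, Nat.centralBinom]
  calc (1:ℝ) = b 0 * x ^ 0 := h0.symm
    _ ≤ G x := hs.le_tsum 0 (fun k _ => mul_nonneg (b_nonneg k) (pow_nonneg hx0 k))

lemma G_eq {x : ℝ} (hx0 : 0 ≤ x) (hx : x < 1) : G x = 1 / Real.sqrt (1 - x) := by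
  have habs : ∀ z ∈ Icc (0:ℝ) x, |z| < 1 := fun z hz => by
    rw [abs_of_nonneg hz.1]; exact lt_of_le_of_lt hz.2 hx
  set H : ℝ → ℝ := fun z => (G z)^2 * (1 - z) with hH
  have hHderiv : ∀ z ∈ Icc (0:ℝ) x, HasDerivAt H 0 z := by
    intro z hz
    have hz1 := habs z hz
    have h1 : HasDerivAt (fun z => (G z)^2) (2 * G z ^ 1 * D z) z := (G_hasDeriv hz1).pow 2
    have h2 : HasDerivAt (fun z : ℝ => 1 - z) (-1) z := (hasDerivAt_id z).const_sub 1
    have h3 := h1.mul h2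
    have heq : 2 * G z ^ 1 * D z * (1 - z) + (G z)^2 * (-1) = 0 := by
      have hd := D_eq hz1
      linear_combination (G z) * hd
    rwa [heq] at h3
  have hcont : ContinuousOn H (Icc 0 x) :=
    fun z hz => ((hHderiv z hz).continuousAt).continuousWithinAt
  have hHx : H x = 1 := by
    have := eq_of_has_deriv_right_eq (f' := fun _ => (0:ℝ))
      (fun z hz => (hHderiv z (Ico_subset_Icc_self hz)).hasDerivWithinAt)
      (fun z _ => (hasDerivAt_const z (1:ℝ)).hasDerivWithinAt)
      hcont continuousOn_const (by simp [hH, G_zero]) x (right_mem_Icc.2 hx0)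
    simpa using this
  have h1x : 0 < 1 - x := by linarith
  have hG0 : 0 < G x := lt_of_lt_of_le one_pos (G_ge_one hx0 hx)
  have h2 : (G x)^2 = 1 / (1 - x) := by
    rw [eq_div_iff h1x.ne']
    simpa [hH] using hHx
  calc G x = Real.sqrt ((G x)^2) := (Real.sqrt_sq hG0.le).symm
    _ = Real.sqrt (1 / (1 - x)) := by rw [h2]
    _ = 1 / Real.sqrt (1 - x) := by rw [one_div, one_div, Real.sqrt_inv]


noncomputable def c (k : ℕ) : ℝ := b k / (2*(k:ℝ)+1)

lemma c_nonneg (k : ℕ) : 0 ≤ c k := div_nonneg (b_nonneg k) (by positivity)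

lemma c_le_one (k : ℕ) : c k ≤ 1 := by
  rw [c, div_le_one (by positivity)]
  calc b k ≤ 1 := b_le_one k
    _ ≤ 2*(k:ℝ)+1 := by linarith [Nat.cast_nonneg (α := ℝ) k]

noncomputable def A (y : ℝ) : ℝ := ∑' k : ℕ, c k * y ^ (2*k+1)

lemma summable_A {y : ℝ} (hy : |y| < 1) : Summable (fun k : ℕ => c k * y ^ (2*k+1)) := by
  have hsq : |y|^2 < 1 := by nlinarith [abs_nonneg y]
  have hgeo : Summable (fun k : ℕ => (|y|^2) ^ k) :=
    summable_geometric_of_lt_one (by positivity) hsq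
  refine Summable.of_norm_bounded hgeo (fun k => ?_)
  rw [Real.norm_eq_abs, abs_mul, abs_pow, abs_of_nonneg (c_nonneg k)]
  have hp : |y| ^ (2*k+1) ≤ (|y|^2) ^ k := by
    calc |y| ^ (2*k+1) = |y| ^ (2*k) * |y| := by rw [pow_succ]
      _ ≤ |y| ^ (2*k) * 1 := mul_le_mul_of_nonneg_left hy.le (by positivity)
      _ = (|y|^2) ^ k := by rw [mul_one, ← pow_mul]
  calc c k * |y| ^ (2*k+1) ≤ 1 * ((|y|^2) ^ k) :=
        mul_le_mul (c_le_one k) hp (by positivity) one_pos.le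
    _ = (|y|^2) ^ k := one_mul _

lemma A_hasDeriv {y : ℝ} (hy : |y| < 1) : HasDerivAt A (G (y^2)) y := by
  set r : ℝ := (|y| + 1) / 2 with hr
  have hr0 : 0 < r := by positivity
  have hr1 : r < 1 := by rw [hr]; linarith
  have hyr : |y| < r := by rw [hr]; linarith
  have hsq : r^2 < 1 := by nlinarith
  have hu : Summable (fun k : ℕ => (r^2) ^ k) :=
    summable_geometric_of_lt_one (by positivity) hsq
  have hderiv : ∀ (k : ℕ) (z : ℝ), HasDerivAt (fun w => c k * w ^ (2*k+1)) (b k * z ^ (2*k)) z := by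
    intro k z
    have h1 := (hasDerivAt_pow (2*k+1) z).const_mul (c k)
    have h2 : c k * ((((2*k+1) : ℕ):ℝ) * z ^ (2*k+1-1)) = b k * z ^ (2*k) := by
      have : (2*k+1-1 : ℕ) = 2*k := by omega
      rw [this, c]
      push_cast
      field_simp
    rwa [h2] at h1
  have bnd : ∀ (k : ℕ) (z : ℝ), |z| ≤ r → ‖b k * z ^ (2*k)‖ ≤ (r^2) ^ k := by
    intro k z hz
    rw [Real.norm_eq_abs, abs_mul, abs_pow, abs_of_nonneg (b_nonneg k)]
    calc b k * |z| ^ (2*k) ≤ 1 * r ^ (2*k) :=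
          mul_le_mul (b_le_one k) (pow_le_pow_left₀ (abs_nonneg z) hz _) (by positivity) one_pos.le
      _ = (r^2) ^ k := by rw [one_mul, ← pow_mul]
  have key : HasDerivAt (fun w => ∑' k : ℕ, c k * w ^ (2*k+1)) (∑' k : ℕ, b k * y ^ (2*k)) y :=
    hasDerivAt_tsum_of_isPreconnected (u := fun k : ℕ => (r^2) ^ k)
      (g := fun (k : ℕ) (w : ℝ) => c k * w ^ (2*k+1))
      (g' := fun (k : ℕ) (w : ℝ) => b k * w ^ (2*k))
      (t := Metric.ball (0:ℝ) r) (y₀ := 0) (y := y)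
      hu Metric.isOpen_ball (convex_ball 0 r).isPreconnected
      (fun k z _ => hderiv k z)
      (fun k z hz => by rw [mem_ball_zero_iff, Real.norm_eq_abs] at hz; exact bnd k z hz.le)
      (by rw [mem_ball_zero_iff]; simpa using hr0)
      (summable_A (by simp : |(0:ℝ)| < 1))
      (by rwa [mem_ball_zero_iff, Real.norm_eq_abs])
  have heq : (∑' k : ℕ, b k * y ^ (2*k)) = G (y^2) := by
    rw [G]
    exact tsum_congr fun k => by rw [← pow_mul]
  rw [heq] at key
  exact key

lemma A_eq {y : ℝ} (hy : |y| < 1) : A y = Real.arcsin y := by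
  -- first for 0 ≤ y by interval argument, then oddness
  have main : ∀ z : ℝ, 0 ≤ z → z < 1 → A z = Real.arcsin z := by
    intro z hz0 hz1
    have habs : ∀ w ∈ Icc (0:ℝ) z, |w| < 1 := fun w hw => by
      rw [abs_of_nonneg hw.1]; exact lt_of_le_of_lt hw.2 hz1
    have hG : ∀ w ∈ Icc (0:ℝ) z, G (w^2) = 1 / Real.sqrt (1 - w^2) := by
      intro w hw
      have h1 : |w| < 1 := habs w hw
      exact G_eq (by positivity) (by nlinarith [abs_nonneg w, sq_abs w])
    have := eq_of_has_deriv_right_eq (a := 0) (b := z) (f' := fun w => G (w^2))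
      (f := A) (g := Real.arcsin)
      (fun w hw => (A_hasDeriv (habs w (Ico_subset_Icc_self hw))).hasDerivWithinAt)
      (fun w hw => by
        have h1 : |w| < 1 := habs w (Ico_subset_Icc_self hw)
        have h2 : w ≠ -1 := by intro hc; rw [hc] at h1; norm_num at h1
        have h3 : w ≠ 1 := by intro hc; rw [hc] at h1; norm_num at h1
        have h4 := Real.hasDerivAt_arcsin h2 h3
        show HasDerivWithinAt arcsin (G (w^2)) (Ici w) w
        rw [hG w (Ico_subset_Icc_self hw)]
        exact h4.hasDerivWithinAt)
      (fun w hw => ((A_hasDeriv (habs w hw)).continuousAt).continuousWithinAt)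
      (Real.continuous_arcsin.continuousOn)
      (by
        rw [Real.arcsin_zero, A]
        rw [tsum_congr (fun k : ℕ => by simp : ∀ k : ℕ, c k * (0:ℝ) ^ (2*k+1) = 0)]
        exact tsum_zero)
      z (right_mem_Icc.2 hz0)
    exact this
  rcases le_or_gt 0 y with hy0 | hy0
  · exact main y hy0 (lt_of_abs_lt hy)
  · have hny : 0 ≤ -y := by linarith
    have h1 : A (-y) = Real.arcsin (-y) := main (-y) hny (by rw [abs_of_neg hy0] at hy; linarith)
    have hodd : A (-y) = - A y := by
      rw [A, A, ← tsum_neg]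
      exact tsum_congr fun k => by
        rw [Odd.neg_pow ⟨k, by ring⟩]
        ring
    rw [Real.arcsin_neg, hodd] at h1
    linarith [h1]


lemma key_pow {n d : ℕ} (h : Fin n → EuclideanSpace ℝ (Fin d)) (x : Fin n → ℝ) (m : ℕ) :
    0 ≤ ∑ i, ∑ j, x i * x j * ((inner ℝ (h i) (h j) : ℝ)) ^ m := by
  have hin : ∀ i j, (inner ℝ (h i) (h j) : ℝ) = ∑ a, h i a * h j a := by
    intro i j
    rw [PiLp.inner_apply]
    simp [RCLike.inner_apply]
    exact Finset.sum_congr rfl fun a _ => mul_comm _ _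
  have expand : ∀ i j, x i * x j * ((inner ℝ (h i) (h j) : ℝ)) ^ m
      = ∑ p : Fin m → Fin d, (x i * ∏ t, h i (p t)) * (x j * ∏ t, h j (p t)) := by
    intro i j
    rw [hin, Fintype.sum_pow, Finset.mul_sum]
    refine Finset.sum_congr rfl fun p _ => ?_
    rw [Finset.prod_mul_distrib]
    ring
  calc ∑ i, ∑ j, x i * x j * ((inner ℝ (h i) (h j) : ℝ)) ^ m
      = ∑ p : Fin m → Fin d, (∑ i, x i * ∏ t, h i (p t)) ^ 2 := by
        simp_rw [expand]
        rw [Finset.sum_congr rfl (fun i _ => Finset.sum_comm), Finset.sum_comm]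
        refine Finset.sum_congr rfl fun p _ => ?_
        rw [sq, Finset.sum_mul_sum]
    _ ≥ 0 := Finset.sum_nonneg fun p _ => sq_nonneg _

end Arcsin13


open Arcsin13
theorem stmt_13 (n d : ℕ) (h : Fin n → EuclideanSpace ℝ (Fin d))
    (hunit : ∀ i, ‖h i‖ = 1) :
    (Matrix.of fun i j => Real.arcsin (inner ℝ (h i) (h j) : ℝ)).PosSemidef := by
  set g : Fin n → Fin n → ℝ := fun i j => (inner ℝ (h i) (h j) : ℝ) with hg
  have hg1 : ∀ i j, |g i j| ≤ 1 := by
    intro i j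
    calc |g i j| ≤ ‖h i‖ * ‖h j‖ := abs_real_inner_le_norm _ _
      _ = 1 := by rw [hunit i, hunit j]; ring
  rw [Matrix.posSemidef_iff_dotProduct_mulVec]
  constructor
  · -- Hermitian
    ext i j
    simp only [Matrix.conjTranspose_apply, Matrix.of_apply, star_trivial]
    rw [real_inner_comm]
  · intro x
    -- reduce to quadratic form
    have hform : star x ⬝ᵥ (Matrix.of fun i j => Real.arcsin (g i j)) *ᵥ x
        = ∑ i, ∑ j, x i * x j * Real.arcsin (g i j) := by
      simp only [dotProduct, Matrix.mulVec, Matrix.of_apply, star_trivial,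
        Pi.star_apply, dotProduct]
      refine Finset.sum_congr rfl fun i _ => ?_
      rw [Finset.mul_sum]
      refine Finset.sum_congr rfl fun j _ => ?_
      ring
    rw [hform]
    -- Q t := quadratic form with arcsin (t * g i j)
    set Q : ℝ → ℝ := fun t => ∑ i, ∑ j, x i * x j * Real.arcsin (t * g i j) with hQ
    have hQcont : Continuous Q := by
      refine continuous_finset_sum _ fun i _ => continuous_finset_sum _ fun j _ => ?_
      exact continuous_const.mul (Real.continuous_arcsin.comp (continuous_id.mul continuous_const))
    have hQnonneg : ∀ t ∈ Ico (0:ℝ) 1, 0 ≤ Q t := by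
      intro t ht
      obtain ⟨ht0, ht1⟩ := ht
      have htg : ∀ i j, |t * g i j| < 1 := by
        intro i j
        rw [abs_mul, abs_of_nonneg ht0]
        calc t * |g i j| ≤ t * 1 := mul_le_mul_of_nonneg_left (hg1 i j) ht0
          _ = t := mul_one t
          _ < 1 := ht1
      have hsum1 : ∀ i j : Fin n, Summable (fun k : ℕ => x i * x j * (c k * (t * g i j) ^ (2*k+1))) :=
        fun i j => (summable_A (htg i j)).mul_left _
      have hsum2 : ∀ i : Fin n, Summable (fun k : ℕ => ∑ j, x i * x j * (c k * (t * g i j) ^ (2*k+1))) :=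
        fun i => summable_sum (fun j _ => hsum1 i j)
      have hrw : Q t = ∑' k : ℕ, ∑ i, ∑ j, x i * x j * (c k * (t * g i j) ^ (2*k+1)) := by
        rw [hQ]
        have h1 : ∀ i j : Fin n, x i * x j * Real.arcsin (t * g i j)
            = ∑' k : ℕ, x i * x j * (c k * (t * g i j) ^ (2*k+1)) := by
          intro i j
          rw [← A_eq (htg i j), A, ← tsum_mul_left]
        simp_rw [h1]
        rw [Finset.sum_congr rfl (fun i _ => (Summable.tsum_finsetSum (fun j _ => hsum1 i j)).symm)]
        exact (Summable.tsum_finsetSum (fun i _ => hsum2 i)).symm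
      rw [hrw]
      refine tsum_nonneg fun k => ?_
      have h2 : ∀ i j : Fin n, x i * x j * (c k * (t * g i j) ^ (2*k+1))
          = (c k * t ^ (2*k+1)) * (x i * x j * (g i j) ^ (2*k+1)) := by
        intro i j
        rw [mul_pow]
        ring
      simp_rw [h2, ← Finset.mul_sum]
      exact mul_nonneg (mul_nonneg (c_nonneg k) (pow_nonneg ht0 _)) (key_pow h x (2*k+1))
    -- limit argument
    have hne : (nhdsWithin (1:ℝ) (Ico (0:ℝ) 1)).NeBot := by
      rw [← mem_closure_iff_nhdsWithin_neBot, closure_Ico (by norm_num : (0:ℝ) ≠ 1)]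
      exact ⟨by norm_num, le_refl 1⟩
    have htend : Filter.Tendsto Q (nhdsWithin 1 (Ico (0:ℝ) 1)) (nhds (Q 1)) :=
      (hQcont.tendsto 1).mono_left nhdsWithin_le_nhds
    have h01 : (0:ℝ) ≤ Q 1 :=
      ge_of_tendsto htend (Filter.eventually_of_mem self_mem_nhdsWithin (fun t ht => hQnonneg t ht))
    calc (0:ℝ) ≤ Q 1 := h01
      _ = ∑ i, ∑ j, x i * x j * Real.arcsin (g i j) := by
        rw [hQ]
        refine Finset.sum_congr rfl fun i _ => Finset.sum_congr rfl fun j _ => ?_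
        rw [one_mul]
end

section
/- Let h_1, …, h_n ∈ ℝᵈ be unit vectors (‖h_i‖ = 1 for all i), and set ρ_{ij} = ⟨h_i, h_j⟩. Then the n × n real matrix Θ' with entries Θ'_{ij} = ρ_{ij} · (π - arccos ρ_{ij})/(2π) is positive semidefinite. -/
open Matrix Real Finset Nat MeasureTheory Set

lemma schur_pow {n d : ℕ} (h : Fin n → EuclideanSpace ℝ (Fin d)) :
    ∀ (m : ℕ) (x : Fin n → ℝ),
      0 ≤ ∑ i, ∑ j, x i * x j * (inner ℝ (h i) (h j) : ℝ) ^ m := by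
  intro m
  induction m with
  | zero =>
    intro x
    simp only [pow_zero, mul_one]
    have e : ∑ i, ∑ j, x i * x j = (∑ i, x i) * (∑ j, x j) := by
      rw [Finset.sum_mul_sum]
    rw [e]
    exact mul_self_nonneg _
  | succ m ih =>
    intro x
    have hinner : ∀ i j : Fin n, (inner ℝ (h i) (h j) : ℝ) = ∑ c, h i c * h j c := by
      intro i j
      simp [PiLp.inner_apply, RCLike.inner_apply, mul_comm]
    have expand : ∀ (i j : Fin n) (a : ℝ),
        x i * x j * a * (inner ℝ (h i) (h j) : ℝ)
          = ∑ c, (x i * h i c) * (x j * h j c) * a := by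
      intro i j a
      rw [hinner i j, Finset.mul_sum]
      exact Finset.sum_congr rfl fun c _ => by ring
    have step : (∑ i, ∑ j, x i * x j * (inner ℝ (h i) (h j) : ℝ) ^ (m + 1))
        = ∑ c, ∑ i, ∑ j,
            ((fun i => x i * h i c) i) * ((fun i => x i * h i c) j)
              * (inner ℝ (h i) (h j) : ℝ) ^ m := by
      calc ∑ i, ∑ j, x i * x j * (inner ℝ (h i) (h j) : ℝ) ^ (m + 1)
          = ∑ i, ∑ j, ∑ c, (x i * h i c) * (x j * h j c) * (inner ℝ (h i) (h j) : ℝ) ^ m := by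
            refine Finset.sum_congr rfl fun i _ => Finset.sum_congr rfl fun j _ => ?_
            rw [pow_succ, ← mul_assoc]
            exact expand i j _
        _ = ∑ i, ∑ c, ∑ j, (x i * h i c) * (x j * h j c) * (inner ℝ (h i) (h j) : ℝ) ^ m := by
            exact Finset.sum_congr rfl fun i _ => Finset.sum_comm
        _ = ∑ c, ∑ i, ∑ j, (x i * h i c) * (x j * h j c) * (inner ℝ (h i) (h j) : ℝ) ^ m := by
            exact Finset.sum_comm
    rw [step]
    exact Finset.sum_nonneg fun c _ => ih (fun i => x i * h i c)

lemma exp_comb {n d : ℕ} (h : Fin n → EuclideanSpace ℝ (Fin d))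
    (a c : ℝ) (hc : 0 ≤ c) (x : Fin n → ℝ) :
    0 ≤ ∑ i, ∑ j, x i * x j *
      ((a * (inner ℝ (h i) (h j) : ℝ)) ^ 2
        * Real.exp (c * (a * (inner ℝ (h i) (h j) : ℝ)) ^ 2)) := by
  have hexp : ∀ y : ℝ, HasSum (fun k : ℕ => y ^ k / k !) (Real.exp y) := by
    intro y
    rw [Real.exp_eq_exp_ℝ]
    exact NormedSpace.expSeries_div_hasSum_exp y
  set r : Fin n → Fin n → ℝ := fun i j => (inner ℝ (h i) (h j) : ℝ) with hr
  have hij : ∀ i j : Fin n, HasSum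
      (fun k : ℕ => x i * x j * ((a * r i j) ^ 2 * ((c * (a * r i j) ^ 2) ^ k / k !)))
      (x i * x j * ((a * r i j) ^ 2 * Real.exp (c * (a * r i j) ^ 2))) := by
    intro i j
    exact ((hexp (c * (a * r i j) ^ 2)).mul_left ((a * r i j) ^ 2)).mul_left (x i * x j)
  have htot : HasSum
      (fun k : ℕ => ∑ i, ∑ j, x i * x j * ((a * r i j) ^ 2 * ((c * (a * r i j) ^ 2) ^ k / k !)))
      (∑ i, ∑ j, x i * x j * ((a * r i j) ^ 2 * Real.exp (c * (a * r i j) ^ 2))) :=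
    hasSum_sum fun i _ => hasSum_sum fun j _ => hij i j
  refine htot.nonneg fun k => ?_
  have e : ∀ i j : Fin n,
      x i * x j * ((a * r i j) ^ 2 * ((c * (a * r i j) ^ 2) ^ k / k !))
        = (a ^ 2 * (a ^ 2) ^ k * c ^ k / k !) * (x i * x j * r i j ^ (2 * k + 2)) := by
    intro i j
    rw [mul_pow, mul_pow, pow_add, pow_mul, mul_pow]
    ring
  calc (0:ℝ) ≤ (a ^ 2 * (a ^ 2) ^ k * c ^ k / k !)
        * ∑ i, ∑ j, x i * x j * r i j ^ (2 * k + 2) := by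
        refine mul_nonneg (div_nonneg ?_ (by positivity)) (schur_pow h (2 * k + 2) x)
        exact mul_nonneg (mul_nonneg (sq_nonneg a) (pow_nonneg (sq_nonneg a) k)) (pow_nonneg hc k)
    _ = ∑ i, ∑ j, x i * x j * ((a * r i j) ^ 2 * ((c * (a * r i j) ^ 2) ^ k / k !)) := by
        rw [Finset.mul_sum]
        refine Finset.sum_congr rfl fun i _ => ?_
        rw [Finset.mul_sum]
        exact Finset.sum_congr rfl fun j _ => (e i j).symm

lemma gauss_repr {b : ℝ} (hb : 0 < b) (K : ℝ) :
    K / Real.sqrt b = (2 / Real.sqrt π) * ∫ u in Ioi (0:ℝ), K * Real.exp (-b * u ^ 2) := by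
  rw [MeasureTheory.integral_const_mul, integral_gaussian_Ioi b,
    Real.sqrt_div pi_pos.le b]
  have h1 : (0:ℝ) < Real.sqrt π := Real.sqrt_pos.2 pi_pos
  have h2 : (0:ℝ) < Real.sqrt b := Real.sqrt_pos.2 hb
  field_simp

lemma F_nonneg {n d : ℕ} (h : Fin n → EuclideanSpace ℝ (Fin d)) (x : Fin n → ℝ)
    (t s : ℝ)
    (hb : ∀ i j : Fin n, 0 < 1 - (t * (inner ℝ (h i) (h j) : ℝ) * s) ^ 2) :
    0 ≤ ∑ i, ∑ j, x i * x j *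
      ((t * (inner ℝ (h i) (h j) : ℝ)) ^ 2
        / Real.sqrt (1 - (t * (inner ℝ (h i) (h j) : ℝ) * s) ^ 2)) := by
  set r : Fin n → Fin n → ℝ := fun i j => (inner ℝ (h i) (h j) : ℝ) with hr
  set g : Fin n → Fin n → ℝ → ℝ := fun i j u =>
    x i * x j * ((t * r i j) ^ 2 * Real.exp (-(1 - (t * r i j * s) ^ 2) * u ^ 2)) with hg
  have hint : ∀ i j : Fin n, IntegrableOn (g i j) (Ioi (0:ℝ)) volume := by
    intro i j
    exact (((integrable_exp_neg_mul_sq (hb i j)).const_mul ((t * r i j) ^ 2)).const_mul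
      (x i * x j)).integrableOn
  have hterm : ∀ i j : Fin n,
      x i * x j * ((t * r i j) ^ 2 / Real.sqrt (1 - (t * r i j * s) ^ 2))
        = (2 / Real.sqrt π) * ∫ u in Ioi (0:ℝ), g i j u := by
    intro i j
    rw [hg]
    simp only []
    rw [MeasureTheory.integral_const_mul,
      gauss_repr (b := 1 - (t * r i j * s) ^ 2) (hb i j) ((t * r i j) ^ 2)]
    ring
  calc (0:ℝ) ≤ (2 / Real.sqrt π) * ∫ u in Ioi (0:ℝ), ∑ i, ∑ j, g i j u := by
        refine mul_nonneg (by positivity) ?_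
        refine MeasureTheory.setIntegral_nonneg measurableSet_Ioi fun u hu => ?_
        have key := exp_comb h t ((u * s) ^ 2) (sq_nonneg _) x
        have ept : ∀ i j : Fin n, g i j u
            = Real.exp (-u ^ 2) * (x i * x j *
              ((t * r i j) ^ 2 * Real.exp ((u * s) ^ 2 * (t * r i j) ^ 2))) := by
          intro i j
          rw [hg]
          simp only []
          rw [show -(1 - (t * r i j * s) ^ 2) * u ^ 2
              = -u ^ 2 + (u * s) ^ 2 * (t * r i j) ^ 2 by ring, Real.exp_add]
          ring
        calc (0:ℝ) ≤ Real.exp (-u ^ 2) * ∑ i, ∑ j, x i * x j *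
              ((t * r i j) ^ 2 * Real.exp ((u * s) ^ 2 * (t * r i j) ^ 2)) :=
              mul_nonneg (Real.exp_nonneg _) key
          _ = ∑ i, ∑ j, g i j u := by
              rw [Finset.mul_sum]
              refine Finset.sum_congr rfl fun i _ => ?_
              rw [Finset.mul_sum]
              exact Finset.sum_congr rfl fun j _ => (ept i j).symm
    _ = (2 / Real.sqrt π) * ∑ i, ∑ j, ∫ u in Ioi (0:ℝ), g i j u := by
        congr 1
        rw [MeasureTheory.integral_finset_sum _ fun i _ =>
          MeasureTheory.integrable_finset_sum _ fun j _ => hint i j]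
        exact Finset.sum_congr rfl fun i _ =>
          MeasureTheory.integral_finset_sum _ fun j _ => hint i j
    _ = ∑ i, ∑ j, x i * x j * ((t * r i j) ^ 2 / Real.sqrt (1 - (t * r i j * s) ^ 2)) := by
        rw [Finset.mul_sum]
        refine Finset.sum_congr rfl fun i _ => ?_
        rw [Finset.mul_sum]
        exact Finset.sum_congr rfl fun j _ => (hterm i j).symm

lemma mul_arcsin_eq {r : ℝ} (hr : |r| < 1) :
    r * Real.arcsin r = ∫ s in (0:ℝ)..1, r ^ 2 / Real.sqrt (1 - (r * s) ^ 2) := by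
  have hpos : ∀ s : ℝ, s ∈ Set.uIcc (0:ℝ) 1 → 0 < 1 - (r * s) ^ 2 := by
    intro s hs
    rw [Set.uIcc_of_le zero_le_one] at hs
    have hs' : |s| ≤ 1 := abs_le.2 ⟨by linarith [hs.1], hs.2⟩
    have h1 : |r * s| < 1 := by
      rw [abs_mul]
      calc |r| * |s| ≤ |r| * 1 := mul_le_mul_of_nonneg_left hs' (abs_nonneg r)
        _ = |r| := mul_one _
        _ < 1 := hr
    have := abs_lt.1 h1
    nlinarith [this.1, this.2]
  have hderiv : ∀ s ∈ Set.uIcc (0:ℝ) 1,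
      HasDerivAt (fun s => r * Real.arcsin (r * s))
        (r ^ 2 / Real.sqrt (1 - (r * s) ^ 2)) s := by
    intro s hs
    have hp := hpos s hs
    have h1 : r * s ≠ -1 := by intro hc; rw [hc] at hp; norm_num at hp
    have h2 : r * s ≠ 1 := by intro hc; rw [hc] at hp; norm_num at hp
    have hlin : HasDerivAt (fun s : ℝ => r * s) r s := by
      simpa using (hasDerivAt_id s).const_mul r
    have hd := (Real.hasDerivAt_arcsin h1 h2).comp s hlin
    have hd2 : HasDerivAt (fun s => r * Real.arcsin (r * s)) (r * (1 / √(1 - (r * s) ^ 2) * r)) s := hd.const_mul r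
    convert hd2 using 1
    have hsq : Real.sqrt (1 - (r * s) ^ 2) ≠ 0 := ne_of_gt (Real.sqrt_pos.2 hp)
    field_simp [Function.comp]
  have hcont : ContinuousOn (fun s => r ^ 2 / Real.sqrt (1 - (r * s) ^ 2))
      (Set.uIcc (0:ℝ) 1) := by
    apply ContinuousOn.div continuousOn_const
    · exact (Real.continuous_sqrt.comp (by continuity)).continuousOn
    · intro s hs
      exact ne_of_gt (Real.sqrt_pos.2 (hpos s hs))
  have key := intervalIntegral.integral_eq_sub_of_hasDerivAt hderiv
    hcont.intervalIntegrable
  rw [key]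
  simp

lemma Q2_generic {n : ℕ} (r : Fin n → Fin n → ℝ) (x : Fin n → ℝ) (t : ℝ)
    (htr : ∀ i j : Fin n, |t * r i j| < 1)
    (hF : ∀ s ∈ Set.Icc (0:ℝ) 1,
      0 ≤ ∑ i, ∑ j, x i * x j *
        ((t * r i j) ^ 2 / Real.sqrt (1 - (t * r i j * s) ^ 2))) :
    0 ≤ ∑ i, ∑ j, x i * x j *
      ((t * r i j) * Real.arcsin (t * r i j)) := by
  have hIcc : ∀ s ∈ Set.Icc (0:ℝ) 1, ∀ i j : Fin n, 0 < 1 - (t * r i j * s) ^ 2 := by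
    intro s hs i j
    have hs' : |s| ≤ 1 := abs_le.2 ⟨by linarith [hs.1], hs.2⟩
    have h1 : |t * r i j * s| < 1 := by
      rw [abs_mul]
      calc |t * r i j| * |s| ≤ |t * r i j| * 1 :=
            mul_le_mul_of_nonneg_left hs' (abs_nonneg _)
        _ = |t * r i j| := mul_one _
        _ < 1 := htr i j
    have := abs_lt.1 h1
    nlinarith [this.1, this.2]
  have hconts : ∀ i j : Fin n, ContinuousOn
      (fun s => x i * x j * ((t * r i j) ^ 2 / Real.sqrt (1 - (t * r i j * s) ^ 2)))
      (Set.uIcc (0:ℝ) 1) := by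
    intro i j
    apply ContinuousOn.mul continuousOn_const
    apply ContinuousOn.div continuousOn_const
    · exact (Real.continuous_sqrt.comp (by continuity)).continuousOn
    · intro s hs
      rw [Set.uIcc_of_le zero_le_one] at hs
      exact ne_of_gt (Real.sqrt_pos.2 (hIcc s hs i j))
  have hint1 : ∀ i : Fin n, IntervalIntegrable
      (fun s => ∑ j, x i * x j * ((t * r i j) ^ 2 / Real.sqrt (1 - (t * r i j * s) ^ 2)))
      MeasureTheory.volume 0 1 := by
    intro i
    have h1 := IntervalIntegrable.sum (μ := MeasureTheory.volume) (a := 0) (b := 1)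
      Finset.univ
      (fun j (_ : j ∈ Finset.univ) => (hconts i j).intervalIntegrable)
    have e : (∑ j : Fin n, fun s =>
          x i * x j * ((t * r i j) ^ 2 / Real.sqrt (1 - (t * r i j * s) ^ 2)))
        = fun s => ∑ j, x i * x j * ((t * r i j) ^ 2 / Real.sqrt (1 - (t * r i j * s) ^ 2)) := by
      funext s; simp
    rwa [e] at h1
  calc (0:ℝ) ≤ ∫ s in (0:ℝ)..1, ∑ i, ∑ j,
        x i * x j * ((t * r i j) ^ 2 / Real.sqrt (1 - (t * r i j * s) ^ 2)) :=
        intervalIntegral.integral_nonneg zero_le_one fun s hs => hF s hs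
    _ = ∑ i, ∫ s in (0:ℝ)..1, ∑ j,
        x i * x j * ((t * r i j) ^ 2 / Real.sqrt (1 - (t * r i j * s) ^ 2)) :=
        intervalIntegral.integral_finset_sum (fun i _ => hint1 i)
    _ = ∑ i, ∑ j, ∫ s in (0:ℝ)..1,
        x i * x j * ((t * r i j) ^ 2 / Real.sqrt (1 - (t * r i j * s) ^ 2)) :=
        Finset.sum_congr rfl fun i _ =>
          intervalIntegral.integral_finset_sum
            (fun j _ => (hconts i j).intervalIntegrable)
    _ = ∑ i, ∑ j, x i * x j * ((t * r i j) * Real.arcsin (t * r i j)) := by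
        refine Finset.sum_congr rfl fun i _ => Finset.sum_congr rfl fun j _ => ?_
        rw [intervalIntegral.integral_const_mul, ← mul_arcsin_eq (htr i j)]

theorem stmt_14 (n d : ℕ) (h : Fin n → EuclideanSpace ℝ (Fin d))
    (hunit : ∀ i, ‖h i‖ = 1) :
    (Matrix.of fun i j =>
        (inner ℝ (h i) (h j) : ℝ)
          * (π - Real.arccos (inner ℝ (h i) (h j) : ℝ)) / (2 * π)).PosSemidef := by
  have hrle : ∀ i j : Fin n, |(inner ℝ (h i) (h j) : ℝ)| ≤ 1 := by
    intro i j
    have := abs_real_inner_le_norm (h i) (h j)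
    rwa [hunit i, hunit j, mul_one] at this
  constructor
  · ext i j
    simp only [Matrix.conjTranspose_apply, Matrix.of_apply, star_trivial]
    rw [real_inner_comm (h j) (h i)]
  intro x
  -- reduce to a double-sum inequality
  have hmain : 0 ≤ ∑ i, ∑ j, x i * x j *
      ((inner ℝ (h i) (h j) : ℝ)
        * (π - Real.arccos (inner ℝ (h i) (h j) : ℝ)) / (2 * π)) := by
    set g : ℝ → ℝ := fun t => ∑ i, ∑ j, x i * x j *
      (t * (inner ℝ (h i) (h j) : ℝ)
        * (π - Real.arccos (t * (inner ℝ (h i) (h j) : ℝ))) / (2 * π)) with hg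
    have repr : ∀ v : ℝ, v * (π - Real.arccos v) / (2 * π)
        = v / 4 + v * Real.arcsin v / (2 * π) := by
      intro v
      rw [Real.arccos_eq_pi_div_two_sub_arcsin]
      have hπ : (π : ℝ) ≠ 0 := ne_of_gt pi_pos
      field_simp
      ring
    have hpos : ∀ t ∈ Set.Ioo (0:ℝ) 1, 0 ≤ g t := by
      intro t ht
      have ht1 : |t| < 1 := by
        rw [abs_of_pos ht.1]; exact ht.2
      have htr : ∀ i j : Fin n, |t * (inner ℝ (h i) (h j) : ℝ)| < 1 := by
        intro i j
        rw [abs_mul]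
        calc |t| * |(inner ℝ (h i) (h j) : ℝ)| ≤ |t| * 1 :=
              mul_le_mul_of_nonneg_left (hrle i j) (abs_nonneg t)
          _ = |t| := mul_one _
          _ < 1 := ht1
      have hB : ∀ s ∈ Set.Icc (0:ℝ) 1, ∀ i j : Fin n,
          0 < 1 - (t * (inner ℝ (h i) (h j) : ℝ) * s) ^ 2 := by
        intro s hs i j
        have hs' : |s| ≤ 1 := abs_le.2 ⟨by linarith [hs.1], hs.2⟩
        have h1 : |t * (inner ℝ (h i) (h j) : ℝ) * s| < 1 := by
          rw [abs_mul]
          calc |t * (inner ℝ (h i) (h j) : ℝ)| * |s|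
              ≤ |t * (inner ℝ (h i) (h j) : ℝ)| * 1 :=
                mul_le_mul_of_nonneg_left hs' (abs_nonneg _)
            _ = |t * (inner ℝ (h i) (h j) : ℝ)| := mul_one _
            _ < 1 := htr i j
        have := abs_lt.1 h1
        nlinarith [this.1, this.2]
      have hQ2 : 0 ≤ ∑ i, ∑ j, x i * x j *
          ((t * (inner ℝ (h i) (h j) : ℝ))
            * Real.arcsin (t * (inner ℝ (h i) (h j) : ℝ))) :=
        Q2_generic (fun i j => (inner ℝ (h i) (h j) : ℝ)) x t htr
          (fun s hs => F_nonneg h x t s (hB s hs))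
      have hQ1 : 0 ≤ ∑ i, ∑ j, x i * x j * (inner ℝ (h i) (h j) : ℝ) := by
        have := schur_pow h 1 x
        simpa using this
      have decomp : g t = (t / 4) * (∑ i, ∑ j, x i * x j * (inner ℝ (h i) (h j) : ℝ))
          + (1 / (2 * π)) * ∑ i, ∑ j, x i * x j *
            ((t * (inner ℝ (h i) (h j) : ℝ))
              * Real.arcsin (t * (inner ℝ (h i) (h j) : ℝ))) := by
        rw [hg]
        simp only []
        rw [Finset.mul_sum, Finset.mul_sum, ← Finset.sum_add_distrib]
        refine Finset.sum_congr rfl fun i _ => ?_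
        rw [Finset.mul_sum, Finset.mul_sum, ← Finset.sum_add_distrib]
        refine Finset.sum_congr rfl fun j _ => ?_
        rw [repr (t * (inner ℝ (h i) (h j) : ℝ))]
        ring
      rw [decomp]
      have h2π : 0 < 1 / (2 * π) := by positivity
      have ht4 : 0 ≤ t / 4 := by linarith [ht.1]
      nlinarith [mul_nonneg ht4 hQ1, mul_nonneg h2π.le hQ2]
    have hcont : Continuous g := by
      rw [hg]
      refine continuous_finset_sum _ fun i _ => continuous_finset_sum _ fun j _ => ?_
      have hc1 : Continuous fun t : ℝ => t * (inner ℝ (h i) (h j) : ℝ) :=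
        continuous_mul_right _
      exact continuous_const.mul
        ((hc1.mul (continuous_const.sub (Real.continuous_arccos.comp hc1))).div_const _)
    have htend : Filter.Tendsto g (nhdsWithin 1 (Set.Iio 1)) (nhds (g 1)) :=
      (hcont.tendsto 1).mono_left nhdsWithin_le_nhds
    have hev : ∀ᶠ t in nhdsWithin 1 (Set.Iio 1), 0 ≤ g t := by
      filter_upwards [Ioo_mem_nhdsLT_of_mem
        (show (1:ℝ) ∈ Set.Ioc 0 1 by constructor <;> norm_num)] with t ht
      exact hpos t ht
    have h01 : 0 ≤ g 1 := ge_of_tendsto htend hev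
    rw [hg] at h01
    simpa using h01
  -- massage the quadratic form
  have e : star x ⬝ᵥ ((Matrix.of fun i j =>
      (inner ℝ (h i) (h j) : ℝ)
        * (π - Real.arccos (inner ℝ (h i) (h j) : ℝ)) / (2 * π)) *ᵥ x)
      = ∑ i, ∑ j, x i * x j *
        ((inner ℝ (h i) (h j) : ℝ)
          * (π - Real.arccos (inner ℝ (h i) (h j) : ℝ)) / (2 * π)) := by
    simp only [dotProduct, Matrix.mulVec, Pi.star_apply, star_trivial,
      Matrix.of_apply]
    refine Finset.sum_congr rfl fun i _ => ?_
    rw [Finset.mul_sum]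
    refine Finset.sum_congr rfl fun j _ => ?_
    ring
  simp only [Finsupp.sum_fintype, star_trivial, Matrix.of_apply, zero_mul, mul_zero, implies_true, Finset.sum_const_zero]
  refine hmain.trans_eq (Finset.sum_congr rfl fun i _ => Finset.sum_congr rfl fun j _ => by ring)
end

section
/- Let h_1, …, h_n ∈ ℝᵈ be unit vectors (‖h_i‖ = 1 for all i), and set ρ_{ij} = ⟨h_i, h_j⟩. Then the n × n real matrix with entries (√(1 - ρ_{ij}²) + ρ_{ij} · (π - arccos ρ_{ij}))/(2π) is positive semidefinite. -/
open Matrix Real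

noncomputable def bc (m : ℕ) : ℝ := m.centralBinom / 4 ^ m

lemma bc_zero : bc 0 = 1 := by simp [bc]

lemma bc_nonneg (m : ℕ) : 0 ≤ bc m := by
  unfold bc; positivity

lemma bc_rec (m : ℕ) : (2 * m + 2) * bc (m + 1) = (2 * m + 1) * bc m := by
  have h := Nat.succ_mul_centralBinom_succ m
  have h' : ((m + 1 : ℕ) : ℝ) * (Nat.centralBinom (m+1) : ℝ)
      = 2 * (2 * m + 1) * (Nat.centralBinom m : ℝ) := by
    exact_mod_cast congrArg (Nat.cast : ℕ → ℝ) h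
  have h4 : (4:ℝ) ^ (m+1) = 4 * 4 ^ m := by ring
  unfold bc; rw [h4]; field_simp
  push_cast at h' ⊢
  linear_combination 2 * h'

lemma bc_le_one (m : ℕ) : bc m ≤ 1 := by
  induction m with
  | zero => simp [bc_zero]
  | succ k ih =>
      have hrec := bc_rec k
      have h1 : (0:ℝ) < 2 * k + 2 := by positivity
      nlinarith [bc_nonneg k, bc_nonneg (k+1)]

lemma summable_aux {c : ℕ → ℝ} (hc : ∀ m, |c m| ≤ 4) {k : ℕ → ℕ} (hk : ∀ m, m ≤ k m)
    {x : ℝ} (hx : |x| < 1) : Summable (fun m => c m * x ^ (k m)) := by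
  apply Summable.of_norm
  refine Summable.of_nonneg_of_le (fun m => norm_nonneg _) (fun m => ?_)
    (((summable_geometric_of_lt_one (abs_nonneg x) hx)).mul_left 4)
  rw [norm_mul, norm_pow, Real.norm_eq_abs, Real.norm_eq_abs]
  have h1 : |x| ^ (k m) ≤ |x| ^ m := pow_le_pow_of_le_one (abs_nonneg x) hx.le (hk m)
  have h2 : |c m| * |x| ^ k m ≤ 4 * |x| ^ m :=
    mul_le_mul (hc m) h1 (by positivity) (by norm_num)
  exact h2

lemma hasDerivAt_aux {c : ℕ → ℝ} (hc : ∀ m, |c m| ≤ 4) {k : ℕ → ℕ} (hk : ∀ m, m ≤ k m)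
    (hk2 : ∀ m, k m ≤ 2 * m + 2) {x : ℝ} (hx : |x| < 1) :
    HasDerivAt (fun z => ∑' m, c m * z ^ (k m))
      (∑' m, c m * ((k m) * x ^ (k m - 1))) x := by
  set r : ℝ := (1 + |x|) / 2 with hr
  have hr0 : 0 < r := by positivity
  have hxr : |x| < r := by rw [hr]; linarith
  have hr1 : r < 1 := by rw [hr]; linarith
  have hrabs : |r| < 1 := by rwa [abs_of_pos hr0]
  have hle : ∀ m : ℕ, r ^ (m - 1) ≤ r ^ m / r := by
    intro m
    cases m with
    | zero => simp only [Nat.zero_sub, pow_zero]; exact (one_le_div hr0).mpr hr1.le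
    | succ p => simp [pow_succ]; rw [mul_div_assoc, div_self hr0.ne', mul_one]
  have hu : Summable (fun m : ℕ => 4 * ((2 * (m:ℝ) + 2) * (r ^ m / r))) := by
    have s1 : Summable (fun m : ℕ => (m:ℝ) * r ^ m) := by
      simpa using summable_pow_mul_geometric_of_norm_lt_one 1
        (by rwa [Real.norm_eq_abs])
    have s2 : Summable (fun m : ℕ => r ^ m) := summable_geometric_of_lt_one hr0.le hr1
    have s3 := (s1.mul_left (8 / r)).add (s2.mul_left (8 / r))
    exact s3.congr (fun m => by field_simp; ring)
  have hxmem : x ∈ Set.Ioo (-r) r :=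
    Set.mem_Ioo.mpr ⟨by linarith [neg_abs_le x], by linarith [le_abs_self x]⟩
  refine hasDerivAt_tsum_of_isPreconnected hu (isOpen_Ioo (a := -r) (b := r))
    (convex_Ioo _ _).isPreconnected
    (g := fun m z => c m * z ^ (k m)) (g' := fun m y => c m * ((k m) * y ^ (k m - 1)))
    (fun m y _ => (hasDerivAt_pow (k m) y).const_mul (c m))
    (fun m y hy => ?_) hxmem (summable_aux hc hk hx) hxmem
  · have hyr : |y| ≤ r := by
      rw [abs_le]; exact ⟨hy.1.le, hy.2.le⟩
    rw [norm_mul, norm_mul, Real.norm_eq_abs, Real.norm_eq_abs, Real.norm_eq_abs]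
    have e1 : |y| ^ (k m - 1) ≤ r ^ m / r := by
      calc |y| ^ (k m - 1) ≤ r ^ (k m - 1) := pow_le_pow_left₀ (abs_nonneg y) hyr _
        _ ≤ r ^ (m - 1) := pow_le_pow_of_le_one hr0.le hr1.le (Nat.sub_le_sub_right (hk m) 1)
        _ ≤ r ^ m / r := hle m
    have e2 : |(k m : ℝ)| ≤ 2 * (m:ℝ) + 2 := by
      rw [abs_of_nonneg (by positivity)]
      exact_mod_cast hk2 m
    rw [abs_pow]
    calc |c m| * (|(k m : ℝ)| * |y| ^ (k m - 1))
        ≤ 4 * ((2 * (m:ℝ) + 2) * (r ^ m / r)) := by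
          apply mul_le_mul (hc m) _ (by positivity) (by norm_num)
          apply mul_le_mul e2 e1 (by positivity) (by positivity)

lemma summable_deriv_aux {c : ℕ → ℝ} (hc : ∀ m, |c m| ≤ 4) {k : ℕ → ℕ} (hk : ∀ m, m ≤ k m)
    (hk2 : ∀ m, k m ≤ 2 * m + 2) {x : ℝ} (hx : |x| < 1) :
    Summable (fun m => c m * ((k m) * x ^ (k m - 1))) := by
  have hbig : Summable (fun m : ℕ => 4 * ((2 * (m:ℝ) + 2) * |x| ^ (m - 1))) := by
    rw [← summable_nat_add_iff 1]
    have s1 : Summable (fun m : ℕ => (m:ℝ) * |x| ^ m) := by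
      simpa using summable_pow_mul_geometric_of_norm_lt_one 1
        (by rwa [Real.norm_eq_abs, abs_abs])
    have s2 : Summable (fun m : ℕ => |x| ^ m) := summable_geometric_of_lt_one (abs_nonneg x) hx
    have s3 := (s1.mul_left 8).add (s2.mul_left 16)
    exact s3.congr (fun m => by push_cast; ring_nf)
  apply Summable.of_norm
  refine Summable.of_nonneg_of_le (fun m => norm_nonneg _) (fun m => ?_) hbig
  rw [norm_mul, norm_mul, Real.norm_eq_abs, Real.norm_eq_abs, Real.norm_eq_abs, abs_pow]
  have e1 : |x| ^ (k m - 1) ≤ |x| ^ (m - 1) :=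
    pow_le_pow_of_le_one (abs_nonneg x) hx.le (Nat.sub_le_sub_right (hk m) 1)
  have e2 : |(k m : ℝ)| ≤ 2 * (m:ℝ) + 2 := by
    rw [abs_of_nonneg (by positivity)]; exact_mod_cast hk2 m
  apply mul_le_mul (hc m) _ (by positivity) (by norm_num)
  apply mul_le_mul e2 e1 (by positivity) (by positivity)

lemma const_of_deriv0 {F : ℝ → ℝ} (hF : ∀ y ∈ Set.Ioo (-1:ℝ) 1, HasDerivAt F 0 y)
    {x : ℝ} (hx : x ∈ Set.Ioo (-1:ℝ) 1) : F x = F 0 := by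
  rcases le_total 0 x with hx0 | hx0
  · have key := constant_of_has_deriv_right_zero (f := F) (a := 0) (b := x)
      (fun y hy => (hF y ⟨by linarith [hy.1], lt_of_le_of_lt hy.2 hx.2⟩).continuousAt.continuousWithinAt)
      (fun y hy => (hF y ⟨by linarith [hy.1], lt_of_lt_of_le hy.2 (le_of_lt hx.2)⟩).hasDerivWithinAt)
    exact key x ⟨hx0, le_refl x⟩
  · have key := constant_of_has_deriv_right_zero (f := F) (a := x) (b := 0)
      (fun y hy => (hF y ⟨lt_of_lt_of_le hx.1 hy.1, by linarith [hy.2]⟩).continuousAt.continuousWithinAt)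
      (fun y hy => (hF y ⟨lt_of_lt_of_le hx.1 hy.1, by linarith [hy.2]⟩).hasDerivWithinAt)
    exact (key 0 ⟨hx0, le_refl 0⟩).symm

lemma bc_abs_le (m : ℕ) : |bc m| ≤ 4 := by
  rw [abs_of_nonneg (bc_nonneg m)]; linarith [bc_le_one m]

noncomputable def Ufun (z : ℝ) : ℝ := ∑' m, bc m * z ^ (2*m)

lemma summable_Ufun {x : ℝ} (hx : |x| < 1) : Summable (fun m => bc m * x ^ (2*m)) :=
  summable_aux bc_abs_le (fun m => by omega) hx

lemma Ufun_zero : Ufun 0 = 1 := by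
  rw [Ufun, tsum_eq_single 0 (fun m hm => by
    rw [zero_pow (by omega), mul_zero])]
  norm_num [bc_zero]

lemma Ufun_mul_sqrt {x : ℝ} (hx : |x| < 1) : Ufun x * Real.sqrt (1 - x^2) = 1 := by
  have main : ∀ y ∈ Set.Ioo (-1:ℝ) 1, HasDerivAt (fun z => Ufun z * Real.sqrt (1 - z^2)) 0 y := by
    intro y hy
    have hy1 : |y| < 1 := abs_lt.mpr ⟨hy.1, hy.2⟩
    have hpos : 0 < 1 - y^2 := by nlinarith [sq_abs y, abs_nonneg y]
    have hs : 0 < Real.sqrt (1 - y^2) := Real.sqrt_pos.mpr hpos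
    have hsq : Real.sqrt (1 - y^2) ^ 2 = 1 - y^2 := Real.sq_sqrt hpos.le
    have dU : HasDerivAt Ufun (∑' m, bc m * (((2*m : ℕ) : ℝ) * y^(2*m-1))) y :=
      hasDerivAt_aux bc_abs_le (fun m => by omega) (fun m => by omega) hy1
    have dq : HasDerivAt (fun z : ℝ => 1 - z^2) (-(2*y)) y := by
      simpa using (hasDerivAt_pow 2 y).const_sub 1
    have dsq : HasDerivAt (fun z => Real.sqrt (1 - z^2)) (-y / Real.sqrt (1 - y^2)) y := by
      have := (Real.hasDerivAt_sqrt hpos.ne').comp y dq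
      exact this.congr_deriv (by ring)
    -- the key series identity
    set P : ℕ → ℝ := fun m => bc m * (((2*m : ℕ) : ℝ) * y^(2*m-1)) with hP
    have hVsum : Summable P := summable_deriv_aux bc_abs_le (fun m => by omega) (fun m => by omega) hy1
    set V : ℝ := ∑' m, P m with hVdef
    have hVS : HasSum P V := hVsum.hasSum
    have hP0 : P 0 = 0 := by simp [hP]
    have shift : HasSum (fun m => P (m+1)) V := by
      rw [hasSum_nat_add_iff 1]
      simpa [hP0] using hVS
    have hUS : HasSum (fun m => bc m * y ^ (2*m)) (Ufun y) := (summable_Ufun hy1).hasSum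
    have e1 : (fun m => P (m+1) - P m * y^2) = (fun m => bc m * y^(2*m+1)) := by
      funext m
      cases m with
      | zero =>
          have hrec := bc_rec 0
          simp only [hP]
          push_cast at hrec ⊢
          norm_num
          linear_combination y * hrec
      | succ p =>
          have hrec := bc_rec (p+1)
          simp only [hP]
          have e2 : 2*(p+1+1) - 1 = 2*p+3 := by omega
          have e3 : 2*(p+1) - 1 = 2*p+1 := by omega
          have e4 : 2*(p+1) + 1 = 2*p+3 := by omega
          rw [e2, e3, e4]
          push_cast at hrec ⊢
          have hy235 : y^(2*p+1) * y^2 = y^(2*p+3) := by ring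
          linear_combination y^(2*p+3) * hrec - bc (p+1) * ((2*(p:ℝ)+2)) * hy235
    have combo : HasSum (fun m => bc m * y^(2*m+1)) (V - V * y^2) := by
      have := shift.sub (hVS.mul_right (y^2))
      rwa [e1] at this
    have other : HasSum (fun m => bc m * y^(2*m+1)) (Ufun y * y) := by
      have := hUS.mul_right y
      simpa [pow_succ, mul_assoc] using this
    have key : V - V * y^2 = Ufun y * y := combo.unique other
    have dprod := dU.mul dsq
    have hnum : V * (1 - y^2) - Ufun y * y = 0 := by linarith [key]
    have hzero : V * Real.sqrt (1 - y^2) + Ufun y * (-y / Real.sqrt (1 - y^2)) = 0 := by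
      have expand : V * Real.sqrt (1 - y^2) + Ufun y * (-y / Real.sqrt (1 - y^2))
          = (V * (Real.sqrt (1 - y^2))^2 - Ufun y * y) / Real.sqrt (1 - y^2) := by
        field_simp
        ring
      rw [expand, hsq, hnum, zero_div]
    rwa [hzero] at dprod
  have hx' : x ∈ Set.Ioo (-1:ℝ) 1 := ⟨by linarith [neg_abs_le x], by linarith [le_abs_self x]⟩
  have := const_of_deriv0 main hx'
  simpa [Ufun_zero] using this

lemma hasSum_U {x : ℝ} (hx : |x| < 1) :
    HasSum (fun m => bc m * x ^ (2*m)) (1 / Real.sqrt (1 - x^2)) := by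
  have hpos : 0 < 1 - x^2 := by nlinarith [sq_abs x, abs_nonneg x]
  have hs : 0 < Real.sqrt (1 - x^2) := Real.sqrt_pos.mpr hpos
  have hU : Ufun x = 1 / Real.sqrt (1 - x^2) := by
    have := Ufun_mul_sqrt hx
    field_simp
    linarith [this]
  rw [(summable_Ufun hx).hasSum_iff]
  exact hU

lemma abs_div_le4 {b a : ℝ} (hb : |b| ≤ 4) (ha : 1 ≤ a) : |b / a| ≤ 4 := by
  rw [abs_div, abs_of_nonneg (by linarith : (0:ℝ) ≤ a)]
  calc |b| / a ≤ |b| := div_le_self (abs_nonneg b) ha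
    _ ≤ 4 := hb

lemma hasSum_arcsin {x : ℝ} (hx : |x| < 1) :
    HasSum (fun m => (bc m / (2*(m:ℝ)+1)) * x ^ (2*m+1)) (Real.arcsin x) := by
  have hcle : ∀ m : ℕ, |bc m / (2*(m:ℝ)+1)| ≤ 4 := fun m =>
    abs_div_le4 (bc_abs_le m) (by push_cast; linarith [Nat.cast_nonneg (α := ℝ) m])
  have hsummable : Summable (fun m => (bc m / (2*(m:ℝ)+1)) * x ^ (2*m+1)) :=
    summable_aux hcle (fun m => by omega) hx
  have main : ∀ y ∈ Set.Ioo (-1:ℝ) 1,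
      HasDerivAt (fun z => (∑' m, (bc m / (2*(m:ℝ)+1)) * z ^ (2*m+1)) - Real.arcsin z) 0 y := by
    intro y hy
    have hy1 : |y| < 1 := abs_lt.mpr ⟨hy.1, hy.2⟩
    have dA := hasDerivAt_aux hcle (k := fun m => 2*m+1) (fun m => by show m ≤ 2*m+1; omega)
      (fun m => by show 2*m+1 ≤ 2*m+2; omega) hy1
    have hval : (∑' m, (bc m / (2*(m:ℝ)+1)) * (((2*m+1 : ℕ) : ℝ) * y^(2*m+1-1)))
        = 1 / Real.sqrt (1 - y^2) := by
      have e : (fun m => (bc m / (2*(m:ℝ)+1)) * (((2*m+1 : ℕ) : ℝ) * y^(2*m+1-1)))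
          = fun m => bc m * y^(2*m) := by
        funext m
        have h1 : (2*(m:ℝ)+1) ≠ 0 := by positivity
        have e2 : 2*m+1-1 = 2*m := by omega
        rw [e2]
        push_cast
        field_simp
      rw [e]
      exact (hasSum_U hy1).tsum_eq
    rw [hval] at dA
    have darc := Real.hasDerivAt_arcsin (by linarith [hy.1] : y ≠ -1) (by linarith [hy.2] : y ≠ 1)
    have := dA.sub darc
    simpa [Pi.sub_def] using this
  have hx' : x ∈ Set.Ioo (-1:ℝ) 1 := ⟨by linarith [neg_abs_le x], by linarith [le_abs_self x]⟩
  have hconst := const_of_deriv0 main hx'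
  have h0 : (∑' m, (bc m / (2*(m:ℝ)+1)) * (0:ℝ) ^ (2*m+1)) = 0 := by
    refine (tsum_eq_single 0 (fun m hm => by rw [zero_pow (by omega : 2*m+1 ≠ 0), mul_zero])).trans ?_
    simp
  rw [hsummable.hasSum_iff]
  simp only [h0, Real.arcsin_zero, sub_zero] at hconst
  linarith [hconst]

noncomputable def dd (m : ℕ) : ℝ := bc m / ((2*(m:ℝ)+1)*(2*(m:ℝ)+2))

lemma dd_nonneg (m : ℕ) : 0 ≤ dd m := by
  have := bc_nonneg m
  unfold dd
  positivity

lemma dd_abs_le (m : ℕ) : |dd m| ≤ 4 :=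
  abs_div_le4 (bc_abs_le m) (by nlinarith [Nat.cast_nonneg (α := ℝ) m])


noncomputable def gfun (z : ℝ) : ℝ :=
  Real.sqrt (1 - z^2) + z * (π - Real.arccos z) - 1 - π/2 * z

lemma hasSum_S_int {x : ℝ} (hx : |x| < 1) :
    HasSum (fun m => dd m * x ^ (2*m+2)) (gfun x) := by
  have hsummable : Summable (fun m => dd m * x ^ (2*m+2)) :=
    summable_aux dd_abs_le (fun m => by omega) hx
  have main : ∀ y ∈ Set.Ioo (-1:ℝ) 1,
      HasDerivAt (fun z => (∑' m, dd m * z ^ (2*m+2)) - gfun z) 0 y := by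
    intro y hy
    have hy1 : |y| < 1 := abs_lt.mpr ⟨hy.1, hy.2⟩
    have hpos : 0 < 1 - y^2 := by nlinarith [sq_abs y, abs_nonneg y]
    have dS := hasDerivAt_aux dd_abs_le (k := fun m => 2*m+2) (fun m => by show m ≤ 2*m+2; omega)
      (fun m => by show 2*m+2 ≤ 2*m+2; omega) hy1
    have hval : (∑' m, dd m * (((2*m+2 : ℕ) : ℝ) * y^(2*m+2-1))) = Real.arcsin y := by
      have e : (fun m => dd m * (((2*m+2 : ℕ) : ℝ) * y^(2*m+2-1)))
          = fun m => (bc m / (2*(m:ℝ)+1)) * y^(2*m+1) := by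
        funext m
        have h1 : (2*(m:ℝ)+1) ≠ 0 := by positivity
        have h2 : (2*(m:ℝ)+2) ≠ 0 := by positivity
        have e2 : 2*m+2-1 = 2*m+1 := by omega
        rw [e2, dd]
        push_cast
        field_simp
      rw [e]
      exact (hasSum_arcsin hy1).tsum_eq
    rw [hval] at dS
    -- derivative of gfun
    have dq : HasDerivAt (fun z : ℝ => 1 - z^2) (-(2*y)) y := by
      simpa using (hasDerivAt_pow 2 y).const_sub 1
    have dsq : HasDerivAt (fun z => Real.sqrt (1 - z^2)) (-y / Real.sqrt (1 - y^2)) y := by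
      have := (Real.hasDerivAt_sqrt hpos.ne').comp y dq
      exact this.congr_deriv (by ring)
    have darccos := Real.hasDerivAt_arccos (by linarith [hy.1] : y ≠ -1) (by linarith [hy.2] : y ≠ 1)
    have dlin : HasDerivAt (fun z : ℝ => z * (π - Real.arccos z))
        (1 * (π - Real.arccos y) + y * (1 / Real.sqrt (1 - y^2))) y := by
      have := (hasDerivAt_id y).mul (darccos.const_sub π)
      simpa [Pi.mul_def] using this
    have dg : HasDerivAt gfun (Real.arcsin y) y := by
      have dconst : HasDerivAt (fun _ : ℝ => (1:ℝ)) 0 y := hasDerivAt_const y 1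
      have dpi : HasDerivAt (fun z : ℝ => π/2 * z) (π/2) y := by
        simpa using (hasDerivAt_id y).const_mul (π/2)
      have := ((dsq.add dlin).sub dconst).sub dpi
      have harc : Real.arccos y = π/2 - Real.arcsin y := Real.arccos_eq_pi_div_two_sub_arcsin y
      have hs : Real.sqrt (1 - y^2) ≠ 0 := (Real.sqrt_pos.mpr hpos).ne'
      have hval2 : -y / Real.sqrt (1 - y^2) + (1 * (π - Real.arccos y) + y * (1 / Real.sqrt (1 - y^2))) - 0 - π/2
          = Real.arcsin y := by
        rw [harc]
        field_simp
        ring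
      rw [hval2] at this
      exact this
    have := dS.sub dg
    simpa [Pi.sub_def] using this
  have hx' : x ∈ Set.Ioo (-1:ℝ) 1 := ⟨by linarith [neg_abs_le x], by linarith [le_abs_self x]⟩
  have hconst := const_of_deriv0 main hx'
  have h0 : (∑' m, dd m * (0:ℝ) ^ (2*m+2)) = 0 := by
    refine (tsum_eq_single 0 (fun m hm => by rw [zero_pow (by omega : 2*m+2 ≠ 0), mul_zero])).trans ?_
    simp
  have hg0 : gfun 0 = 0 := by
    simp [gfun]
  rw [hsummable.hasSum_iff]
  simp only [h0, hg0, sub_zero] at hconst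
  linarith [hconst]

lemma continuous_gfun : Continuous gfun := by
  unfold gfun
  have h1 : Continuous fun z : ℝ => Real.sqrt (1 - z^2) :=
    Real.continuous_sqrt.comp (by continuity)
  have h2 : Continuous fun z : ℝ => z * (π - Real.arccos z) :=
    continuous_id.mul (continuous_const.sub Real.continuous_arccos)
  continuity

lemma gfun_one : gfun 1 = π/2 - 1 := by
  simp [gfun, Real.arccos_one]
  ring

lemma hasSum_dd_one : HasSum dd (π/2 - 1) := by
  have hmem : Set.Ioo (0:ℝ) 1 ∈ nhdsWithin (1:ℝ) (Set.Iio 1) :=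
    Ioo_mem_nhdsLT_of_mem (by constructor <;> norm_num)
  have hr : Filter.Tendsto gfun (nhdsWithin (1:ℝ) (Set.Iio 1)) (nhds (π/2 - 1)) := by
    have := (continuous_gfun.tendsto 1).mono_left (nhdsWithin_le_nhds (s := Set.Iio 1))
    rwa [gfun_one] at this
  have hbound : ∀ N : ℕ, ∑ m ∈ Finset.range N, dd m ≤ π/2 - 1 := by
    intro N
    have hev : ∀ᶠ t in nhdsWithin (1:ℝ) (Set.Iio 1),
        (fun t : ℝ => ∑ m ∈ Finset.range N, dd m * t ^ (2*m+2)) t ≤ gfun t := by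
      filter_upwards [hmem] with t ht
      have ht1 : |t| < 1 := abs_lt.mpr ⟨by linarith [ht.1], ht.2⟩
      refine sum_le_hasSum (Finset.range N) (fun m _ => ?_) (hasSum_S_int ht1)
      have := dd_nonneg m
      have := ht.1.le
      positivity
    have hl : Filter.Tendsto (fun t : ℝ => ∑ m ∈ Finset.range N, dd m * t ^ (2*m+2))
        (nhdsWithin (1:ℝ) (Set.Iio 1)) (nhds (∑ m ∈ Finset.range N, dd m)) := by
      have hc : Continuous (fun t : ℝ => ∑ m ∈ Finset.range N, dd m * t ^ (2*m+2)) := by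
        apply continuous_finset_sum
        intro m _
        exact continuous_const.mul (continuous_pow _)
      have := (hc.tendsto 1).mono_left (nhdsWithin_le_nhds (s := Set.Iio 1))
      simpa using this
    exact le_of_tendsto_of_tendsto hl hr hev
  have hsum : Summable dd := summable_of_sum_range_le dd_nonneg hbound
  have hle : ∑' m, dd m ≤ π/2 - 1 := Real.tsum_le_of_sum_range_le dd_nonneg hbound
  have hge : π/2 - 1 ≤ ∑' m, dd m := by
    have hev : ∀ᶠ t in nhdsWithin (1:ℝ) (Set.Iio 1), gfun t ≤ ∑' m, dd m := by
      filter_upwards [hmem] with t ht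
      have ht1 : |t| < 1 := abs_lt.mpr ⟨by linarith [ht.1], ht.2⟩
      have h1 := (hasSum_S_int ht1).tsum_eq
      rw [← h1]
      refine Summable.tsum_le_tsum (fun m => ?_) (hasSum_S_int ht1).summable hsum
      have h2 : t ^ (2*m+2) ≤ 1 := by
        apply pow_le_one₀ ht.1.le ht.2.le
      calc dd m * t ^ (2*m+2) ≤ dd m * 1 :=
            mul_le_mul_of_nonneg_left h2 (dd_nonneg m)
        _ = dd m := mul_one _
    exact le_of_tendsto hr hev
  rw [hsum.hasSum_iff]
  linarith

lemma summable_dd_pow {x : ℝ} (hx : |x| ≤ 1) : Summable (fun m => dd m * x ^ (2*m+2)) := by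
  apply Summable.of_norm
  refine Summable.of_nonneg_of_le (fun m => norm_nonneg _) (fun m => ?_) hasSum_dd_one.summable
  rw [norm_mul, Real.norm_eq_abs, Real.norm_eq_abs, abs_of_nonneg (dd_nonneg m), abs_pow]
  calc dd m * |x| ^ (2*m+2) ≤ dd m * 1 := by
        apply mul_le_mul_of_nonneg_left (pow_le_one₀ (abs_nonneg x) hx) (dd_nonneg m)
    _ = dd m := mul_one _

lemma hasSum_S {x : ℝ} (hx : x ∈ Set.Icc (-1:ℝ) 1) :
    HasSum (fun m => dd m * x ^ (2*m+2)) (gfun x) := by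
  rcases lt_or_eq_of_le hx.2 with h1 | h1
  · rcases lt_or_eq_of_le hx.1 with h2 | h2
    · exact hasSum_S_int (abs_lt.mpr ⟨h2, h1⟩)
    · rw [← h2]
      have he : ∀ m : ℕ, ((-1:ℝ)) ^ (2*m+2) = 1 := by
        intro m
        rw [show 2*m+2 = 2*(m+1) by ring, pow_mul, neg_one_sq, one_pow]
      have hg : gfun (-1) = π/2 - 1 := by
        simp [gfun, Real.arccos_neg_one]
        ring
      rw [hg]
      simpa [he] using hasSum_dd_one
  · rw [h1]
    have he : ∀ m : ℕ, ((1:ℝ)) ^ (2*m+2) = 1 := fun m => one_pow _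
    rw [gfun_one]
    simpa [he] using hasSum_dd_one

lemma gram_pow_nonneg {n d : ℕ} (u : Fin n → Fin d → ℝ) (c : Fin n → ℝ) (k : ℕ) :
    0 ≤ ∑ i, ∑ j, c i * c j * (∑ a, u i a * u j a) ^ k := by
  have key : ∀ i j : Fin n,
      c i * c j * (∑ a, u i a * u j a) ^ k
        = ∑ p : Fin k → Fin d, (c i * ∏ l, u i (p l)) * (c j * ∏ l, u j (p l)) := by
    intro i j
    rw [Fintype.sum_pow, Finset.mul_sum]
    refine Finset.sum_congr rfl (fun p _ => ?_)
    rw [Finset.prod_mul_distrib]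
    ring
  simp_rw [key]
  have swap : ∑ i : Fin n, ∑ j : Fin n, ∑ p : Fin k → Fin d,
        (c i * ∏ l, u i (p l)) * (c j * ∏ l, u j (p l))
      = ∑ p : Fin k → Fin d, (∑ i, c i * ∏ l, u i (p l)) * (∑ j, c j * ∏ l, u j (p l)) := by
    calc ∑ i : Fin n, ∑ j : Fin n, ∑ p : Fin k → Fin d,
          (c i * ∏ l, u i (p l)) * (c j * ∏ l, u j (p l))
        = ∑ i : Fin n, ∑ p : Fin k → Fin d, ∑ j : Fin n,
          (c i * ∏ l, u i (p l)) * (c j * ∏ l, u j (p l)) :=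
          Finset.sum_congr rfl (fun i _ => Finset.sum_comm)
      _ = ∑ p : Fin k → Fin d, ∑ i : Fin n, ∑ j : Fin n,
          (c i * ∏ l, u i (p l)) * (c j * ∏ l, u j (p l)) := Finset.sum_comm
      _ = ∑ p : Fin k → Fin d, (∑ i, c i * ∏ l, u i (p l)) * (∑ j, c j * ∏ l, u j (p l)) := by
          refine Finset.sum_congr rfl (fun p _ => ?_)
          rw [Finset.sum_mul_sum]
  rw [swap]
  exact Finset.sum_nonneg (fun p _ => mul_self_nonneg _)

theorem stmt_15 (n d : ℕ) (h : Fin n → EuclideanSpace ℝ (Fin d))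
    (hunit : ∀ i, ‖h i‖ = 1) :
    (Matrix.of fun i j =>
        (Real.sqrt (1 - (inner ℝ (h i) (h j) : ℝ) ^ 2)
            + (inner ℝ (h i) (h j) : ℝ) * (π - Real.arccos (inner ℝ (h i) (h j) : ℝ)))
          / (2 * π)).PosSemidef := by
  set ρ : Fin n → Fin n → ℝ := fun i j => (inner ℝ (h i) (h j) : ℝ) with hρ
  have hρ_mem : ∀ i j, ρ i j ∈ Set.Icc (-1:ℝ) 1 := by
    intro i j
    have := abs_real_inner_le_norm (h i) (h j)
    rw [hunit i, hunit j, mul_one] at this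
    exact abs_le.mp this
  have hρ_inner : ∀ i j, ρ i j = ∑ a, h i a * h j a := by
    intro i j
    rw [hρ]
    simp [PiLp.inner_apply, RCLike.inner_apply, conj_trivial]
    exact Finset.sum_congr rfl (fun _ _ => mul_comm _ _)
  have HS : ∀ i j, HasSum (fun m => dd m * (ρ i j) ^ (2*m+2)) (gfun (ρ i j)) :=
    fun i j => hasSum_S (hρ_mem i j)
  have entry : ∀ i j, Real.sqrt (1 - ρ i j ^ 2) + ρ i j * (π - Real.arccos (ρ i j))
      = 1 + π/2 * ρ i j + ∑' m, dd m * (ρ i j) ^ (2*m+2) := by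
    intro i j
    rw [(HS i j).tsum_eq, gfun]
    ring
  rw [Matrix.posSemidef_iff_dotProduct_mulVec]
  constructor
  · ext i j
    simp only [Matrix.conjTranspose_apply, Matrix.of_apply, star_trivial]
    rw [real_inner_comm (h j) (h i)]
  · intro x
    have star_eq : star x = x := rfl
    rw [star_eq]
    show 0 ≤ ∑ i, x i * ∑ j, (Matrix.of _ : Matrix (Fin n) (Fin n) ℝ) i j * x j
    have hQ : ∀ k : ℕ, 0 ≤ ∑ i, ∑ j, x i * x j * (ρ i j) ^ k := by
      intro k
      have hg := gram_pow_nonneg (fun i a => h i a) x k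
      have he : ∑ i, ∑ j, x i * x j * (ρ i j)^k
          = ∑ i, ∑ j, x i * x j * (∑ a, h i a * h j a)^k := by
        refine Finset.sum_congr rfl (fun i _ => Finset.sum_congr rfl (fun j _ => ?_))
        rw [hρ_inner i j]
      rw [he]
      exact hg
    have hsum_ij : ∀ i j, Summable (fun m => x i * x j * (dd m * (ρ i j) ^ (2*m+2))) :=
      fun i j => (HS i j).summable.mul_left _
    -- the tail sum is nonnegative
    have hT : 0 ≤ ∑ i, ∑ j, x i * x j * (∑' m, dd m * (ρ i j) ^ (2*m+2)) := by
      have step1 : ∀ i : Fin n, ∑ j, x i * x j * (∑' m, dd m * (ρ i j) ^ (2*m+2))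
          = ∑' m, ∑ j, x i * x j * (dd m * (ρ i j) ^ (2*m+2)) := by
        intro i
        rw [Summable.tsum_finsetSum (fun j _ => hsum_ij i j)]
        refine Finset.sum_congr rfl (fun j _ => ?_)
        rw [← tsum_mul_left]
      have step2 : ∑ i, ∑ j, x i * x j * (∑' m, dd m * (ρ i j) ^ (2*m+2))
          = ∑' m, ∑ i, ∑ j, x i * x j * (dd m * (ρ i j) ^ (2*m+2)) := by
        simp_rw [step1]
        rw [Summable.tsum_finsetSum (fun i _ => summable_sum (fun j _ => hsum_ij i j))]
      rw [step2]
      refine tsum_nonneg (fun m => ?_)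
      have he : ∑ i, ∑ j, x i * x j * (dd m * (ρ i j) ^ (2*m+2))
          = dd m * ∑ i, ∑ j, x i * x j * (ρ i j) ^ (2*m+2) := by
        rw [Finset.mul_sum]
        refine Finset.sum_congr rfl (fun i _ => ?_)
        rw [Finset.mul_sum]
        exact Finset.sum_congr rfl (fun j _ => by ring)
      rw [he]
      exact mul_nonneg (dd_nonneg m) (hQ (2*m+2))
    -- expand each entry
    have expand : ∀ i j : Fin n,
        x i * ((Matrix.of fun i j =>
          (Real.sqrt (1 - (inner ℝ (h i) (h j) : ℝ) ^ 2)
            + (inner ℝ (h i) (h j) : ℝ) * (π - Real.arccos (inner ℝ (h i) (h j) : ℝ))) / (2 * π) :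
            Matrix (Fin n) (Fin n) ℝ) i j * x j)
          = (1/(2*π)) * ((x i * x j) + (π/2) * (x i * x j * ρ i j)
              + (x i * x j * (∑' m, dd m * (ρ i j) ^ (2*m+2)))) := by
      intro i j
      simp only [Matrix.of_apply]
      show x i * ((Real.sqrt (1 - ρ i j ^ 2) + ρ i j * (π - Real.arccos (ρ i j)))/(2*π) * x j) = _
      rw [entry i j]
      ring
    have sum_split : ∀ (c : ℝ) (F G H : Fin n → Fin n → ℝ),
        ∑ i, ∑ j, c * (F i j + G i j + H i j)
          = c * ((∑ i, ∑ j, F i j) + (∑ i, ∑ j, G i j) + (∑ i, ∑ j, H i j)) := by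
      intro c F G H
      have inner_eq : ∀ (F G H : Fin n → ℝ), ∑ j, c * (F j + G j + H j)
          = c * ((∑ j, F j) + (∑ j, G j) + (∑ j, H j)) := by
        intro F G H
        rw [← Finset.mul_sum]
        congr 1
        rw [Finset.sum_add_distrib, Finset.sum_add_distrib]
      calc ∑ i, ∑ j, c * (F i j + G i j + H i j)
          = ∑ i, c * ((∑ j, F i j) + (∑ j, G i j) + (∑ j, H i j)) :=
            Finset.sum_congr rfl (fun i _ => inner_eq _ _ _)
        _ = c * ((∑ i, ∑ j, F i j) + (∑ i, ∑ j, G i j) + (∑ i, ∑ j, H i j)) :=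
            inner_eq _ _ _
    have hBpull : ∑ i, ∑ j, π/2 * (x i * x j * ρ i j)
        = π/2 * ∑ i, ∑ j, x i * x j * ρ i j := by
      simp_rw [← Finset.mul_sum]
    calc (0:ℝ) ≤ (1/(2*π)) * ((∑ i, ∑ j, x i * x j) + (∑ i, ∑ j, π/2 * (x i * x j * ρ i j))
        + (∑ i, ∑ j, x i * x j * (∑' m, dd m * (ρ i j) ^ (2*m+2)))) := by
          rw [hBpull]
          have h0 : (0:ℝ) ≤ ∑ i, ∑ j, x i * x j := by
            have := hQ 0
            simpa using this
          have h1 : (0:ℝ) ≤ ∑ i, ∑ j, x i * x j * ρ i j := by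
            have := hQ 1
            simpa using this
          have hπ : (0:ℝ) < π := Real.pi_pos
          have : (0:ℝ) ≤ (π/2) * (∑ i, ∑ j, x i * x j * ρ i j) := by positivity
          positivity
      _ = ∑ i, x i * ∑ j, (Matrix.of fun i j =>
          (Real.sqrt (1 - (inner ℝ (h i) (h j) : ℝ) ^ 2)
            + (inner ℝ (h i) (h j) : ℝ) * (π - Real.arccos (inner ℝ (h i) (h j) : ℝ))) / (2 * π) :
            Matrix (Fin n) (Fin n) ℝ) i j * x j := by
          simp_rw [Finset.mul_sum, expand]
          rw [sum_split]
end

section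
/- Let h_1, …, h_n ∈ ℝᵈ be unit vectors, set ρ_{ij} = ⟨h_i, h_j⟩, and let Θ' be the n × n matrix with entries Θ'_{ij} = ρ_{ij} · (π - arccos ρ_{ij})/(2π). Assume Θ' is positive definite, let B be any n × n positive semidefinite matrix, and set Θ = Θ' + B. Fix a natural number L ≥ 1, reals α₁, α₂, α₄, …, α_{2L}, and vectors β₁, β₂, β₄, …, β_{2L} ∈ ℝᵈ, and define the label vector y ∈ ℝⁿ by y_i = α₁⟨h_i, β₁⟩ + ∑_{l=1}^{L} α_{2l}⟨h_i, β_{2l}⟩^{2l}. Then √(yᵀ Θ⁻¹ y) ≤ 2|α₁|·‖β₁‖ + ∑_{l=1}^{L} √(2π)·(2l - 1)·|α_{2l}|·‖β_{2l}‖^{2l}. -/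
open Real

namespace Stmt16Aux

/-- `cb k = centralBinom k / 4^k`. -/
noncomputable def cb (k : ℕ) : ℝ := (Nat.centralBinom k : ℝ) / 4 ^ k

/-- `as k = cb k / (2k+1)`, the Taylor coefficient of `arcsin`. -/
noncomputable def as (k : ℕ) : ℝ := cb k / (2 * k + 1)

lemma cb_pos (k : ℕ) : 0 < cb k := by
  apply div_pos (by exact_mod_cast Nat.centralBinom_pos k) (by positivity)

lemma as_pos (k : ℕ) : 0 < as k := div_pos (cb_pos k) (by positivity)

lemma cb_zero : cb 0 = 1 := by simp [cb, Nat.centralBinom]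

lemma cb_succ (k : ℕ) : cb (k + 1) * (2 * k + 2) = cb k * (2 * k + 1) := by
  have h := Nat.succ_mul_centralBinom_succ k
  have h' : ((k:ℝ) + 1) * (Nat.centralBinom (k + 1) : ℝ)
      = 2 * (2 * k + 1) * (Nat.centralBinom k : ℝ) := by
    have := congrArg (fun m : ℕ => (m : ℝ)) h
    push_cast at this
    linarith
  have h4 : (4 : ℝ) ^ (k + 1) = 4 ^ k * 4 := by ring
  have h4p : (0:ℝ) < 4 ^ k := by positivity
  simp only [cb, h4]
  field_simp
  nlinarith [h']

lemma cb_mul_self (k : ℕ) : as k * (2 * k + 1) = cb k := by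
  have : (2 * (k : ℝ) + 1) ≠ 0 := by positivity
  rw [as]
  field_simp

lemma cb_sq_le (k : ℕ) : cb k ^ 2 * (2 * k + 1) ≤ 1 := by
  induction k with
  | zero => simp [cb_zero]
  | succ k ih =>
    have h := cb_succ k
    have h2 : (2 * (k : ℝ) + 2) ≠ 0 := by positivity
    have hcb : cb (k + 1) = cb k * (2 * k + 1) / (2 * k + 2) := by
      field_simp; linarith [h]
    rw [hcb]
    have hk : (0:ℝ) ≤ (k:ℝ) := Nat.cast_nonneg k
    have hcbnn : 0 ≤ cb k ^ 2 := sq_nonneg _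
    have key : (cb k * (2 * k + 1) / (2 * k + 2)) ^ 2 * (2 * (k+1) + 1)
        ≤ cb k ^ 2 * (2 * k + 1) := by
      rw [div_pow, div_mul_eq_mul_div, div_le_iff₀ (by positivity)]
      push_cast
      nlinarith [sq_nonneg (cb k), hk]
    calc (cb k * (2 * (k:ℝ) + 1) / (2 * k + 2)) ^ 2 * (2 * ((k:ℕ)+1 : ℕ) + 1)
        ≤ cb k ^ 2 * (2 * k + 1) := by push_cast; push_cast at key; linarith
      _ ≤ 1 := ih

lemma cb_le_one (k : ℕ) : cb k ≤ 1 := by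
  have h := cb_sq_le k
  nlinarith [cb_pos k, Nat.cast_nonneg (α := ℝ) k]

lemma as_le (k : ℕ) : as k ≤ ((k : ℝ) + 1) ^ (-(3/2 : ℝ)) := by
  have hk1 : (0:ℝ) < 2 * k + 1 := by positivity
  have h1 : cb k ≤ 1 / Real.sqrt (2 * k + 1) := by
    rw [le_div_iff₀ (Real.sqrt_pos.2 hk1)]
    have : (cb k * Real.sqrt (2 * k + 1)) ^ 2 ≤ 1 ^ 2 := by
      rw [mul_pow, Real.sq_sqrt hk1.le]
      simpa using cb_sq_le k
    have hnn : 0 ≤ cb k * Real.sqrt (2 * k + 1) :=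
      mul_nonneg (cb_pos k).le (Real.sqrt_nonneg _)
    nlinarith
  have h2 : as k ≤ 1 / Real.sqrt (2 * k + 1) / (2 * k + 1) := by
    unfold as
    exact div_le_div_of_nonneg_right h1 hk1.le
  refine h2.trans ?_
  have h3 : (1:ℝ) / Real.sqrt (2 * k + 1) / (2 * k + 1) = ((2*(k:ℝ)+1)) ^ (-(3/2:ℝ)) := by
    rw [Real.rpow_neg hk1.le, show (3/2 : ℝ) = 1/2 + 1 by norm_num, Real.rpow_add hk1,
      Real.rpow_one, ← Real.sqrt_eq_rpow]
    field_simp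
  rw [h3]
  exact Real.rpow_le_rpow_of_nonpos (by positivity) (by push_cast; linarith) (by norm_num)

end Stmt16Aux

namespace Stmt16Aux
open Real Filter

lemma summable_as : Summable as := by
  have h1 : Summable (fun k : ℕ => ((k : ℝ) + 1) ^ (-(3/2 : ℝ))) := by
    have := (Real.summable_nat_rpow (p := -(3/2 : ℝ))).2 (by norm_num)
    have h2 := (summable_nat_add_iff 1).2 this
    refine h2.congr fun k => ?_
    push_cast
    ring_nf
  exact h1.of_nonneg_of_le (fun k => (as_pos k).le) as_le

lemma summable_as_pow (x : ℝ) (hx : |x| ≤ 1) :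
    Summable (fun k => as k * x ^ (2 * k + 1)) := by
  refine summable_as.of_norm_bounded (fun k => ?_)
  rw [norm_mul, norm_pow, Real.norm_eq_abs, Real.norm_eq_abs, abs_of_pos (as_pos k)]
  calc as k * |x| ^ (2 * k + 1) ≤ as k * 1 ^ (2*k+1) := by
        exact mul_le_mul_of_nonneg_left (pow_le_pow_left₀ (abs_nonneg x) hx _) (as_pos k).le
    _ = as k := by simp

/-- `S x` is the arcsin candidate series. -/
noncomputable def S (x : ℝ) : ℝ := ∑' k, as k * x ^ (2 * k + 1)

/-- `U x` is its formal derivative. -/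
noncomputable def U (x : ℝ) : ℝ := ∑' k, cb k * x ^ (2 * k)

/-- `V x` is the formal derivative of `U`. -/
noncomputable def V (x : ℝ) : ℝ := ∑' k, cb k * (2 * k) * x ^ (2 * k - 1)

lemma summable_cb_pow {x : ℝ} (hx : |x| < 1) :
    Summable (fun k => cb k * x ^ (2 * k)) := by
  refine Summable.of_norm_bounded (g := fun k => (x ^ 2) ^ k) ?_ (fun k => ?_)
  · exact summable_geometric_of_lt_one (by positivity) (by nlinarith [abs_nonneg x, sq_abs x])
  · rw [norm_mul, Real.norm_eq_abs, Real.norm_eq_abs, abs_of_pos (cb_pos k), abs_pow,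
      pow_mul, ← abs_pow]
    calc cb k * |x ^ 2| ^ k ≤ 1 * |x ^ 2| ^ k :=
        mul_le_mul_of_nonneg_right (cb_le_one k) (by positivity)
      _ = (x^2)^k := by rw [one_mul, abs_pow, sq_abs, ← pow_mul, pow_mul]

end Stmt16Aux

namespace Stmt16Aux
open Real Filter

lemma summable_master {x : ℝ} (hx : |x| < 1) {c : ℕ → ℝ} {e : ℕ → ℕ}
    (hc : ∀ k, |c k| ≤ 2 * k + 3) (he : ∀ k, k ≤ e k) :
    Summable (fun k => c k * x ^ e k) := by
  have hgeom : Summable (fun k : ℕ => (2 * (k:ℝ) + 3) * |x| ^ k) := by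
    have h1 : Summable (fun k : ℕ => (k:ℝ) ^ 1 * |x| ^ k) :=
      summable_pow_mul_geometric_of_norm_lt_one 1 (by rwa [Real.norm_eq_abs, abs_abs])
    have h2 : Summable (fun k : ℕ => |x| ^ k) :=
      summable_geometric_of_lt_one (abs_nonneg x) hx
    have := (h1.mul_left 2).add (h2.mul_left 3)
    refine this.congr fun k => ?_
    ring
  refine hgeom.of_norm_bounded (fun k => ?_)
  rw [norm_mul, Real.norm_eq_abs, Real.norm_eq_abs, abs_pow]
  have h1 : |x| ^ e k ≤ |x| ^ k := pow_le_pow_of_le_one (abs_nonneg x) hx.le (he k)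
  have h2 : (0:ℝ) ≤ |x| ^ k := by positivity
  nlinarith [abs_nonneg (c k), pow_nonneg (abs_nonneg x) (e k), hc k, hx,
    mul_le_mul (hc k) h1 (pow_nonneg (abs_nonneg x) (e k)) (by positivity : (0:ℝ) ≤ 2*k+3)]

lemma cb_abs_le (k : ℕ) : |cb k| ≤ 2 * (k:ℝ) + 3 := by
  rw [abs_of_pos (cb_pos k)]; have := cb_le_one k; push_cast; linarith [Nat.cast_nonneg (α := ℝ) k]

lemma hasDerivAt_S {x : ℝ} (hx : |x| < 1) : HasDerivAt S (U x) x := by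
  set r : ℝ := (1 + |x|) / 2 with hr
  have hr0 : 0 < r := by positivity
  have hr1 : r < 1 := by simp only [hr]; linarith
  have hxr : |x| < r := by simp only [hr]; linarith [abs_nonneg x]
  have hmem : x ∈ Set.Ioo (-r) r := abs_lt.1 hxr
  have hsum : Summable (fun k : ℕ => (r ^ 2) ^ k) :=
    summable_geometric_of_lt_one (by positivity) (by nlinarith)
  refine hasDerivAt_tsum_of_isPreconnected hsum isOpen_Ioo
      (convex_Ioo _ _).isPreconnected
      (g := fun k y => as k * y ^ (2 * k + 1)) (g' := fun k y => cb k * y ^ (2 * k))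
      (fun k y _ => ?_) (fun k y hy => ?_) (Set.mem_Ioo.2 ⟨by linarith, hr0⟩) ?_ hmem
  · have h := (hasDerivAt_pow (2 * k + 1) y).const_mul (as k)
    refine h.congr_deriv ?_
    simp only [Nat.add_sub_cancel]
    rw [← cb_mul_self k]
    push_cast
    ring
  · have hy' : |y| ≤ r := le_of_lt (abs_lt.2 ⟨hy.1, hy.2⟩)
    rw [Real.norm_eq_abs, abs_mul, abs_of_pos (cb_pos k), abs_pow]
    calc cb k * |y| ^ (2 * k) ≤ 1 * r ^ (2 * k) := by
          apply mul_le_mul (cb_le_one k) (pow_le_pow_left₀ (abs_nonneg y) hy' _)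
            (by positivity) one_pos.le
      _ = (r ^ 2) ^ k := by rw [one_mul, pow_mul]
  · apply Summable.of_norm_bounded summable_as
    intro k
    simp [abs_of_pos (as_pos k), le_of_lt (as_pos k)]

lemma hasDerivAt_U {x : ℝ} (hx : |x| < 1) : HasDerivAt U (V x) x := by
  set r : ℝ := (1 + |x|) / 2 with hr
  have hr0 : 0 < r := by positivity
  have hr1 : r < 1 := by simp only [hr]; linarith
  have hxr : |x| < r := by simp only [hr]; linarith [abs_nonneg x]
  have hmem : x ∈ Set.Ioo (-r) r := abs_lt.1 hxr
  have hsum : Summable (fun k : ℕ => (2 * (k:ℝ) + 3) * r ^ (2 * k - 1)) := by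
    have := summable_master (x := r) (c := fun k => 2 * (k:ℝ) + 3) (e := fun k => 2 * k - 1)
      (by rwa [abs_of_pos hr0]) (fun k => by rw [abs_of_pos (by positivity)])
      (fun k => by show k ≤ 2 * k - 1; omega)
    exact this
  refine hasDerivAt_tsum_of_isPreconnected hsum isOpen_Ioo
      (convex_Ioo _ _).isPreconnected
      (g := fun k y => cb k * y ^ (2 * k)) (g' := fun k y => cb k * (2 * k) * y ^ (2 * k - 1))
      (fun k y _ => ?_) (fun k y hy => ?_) (Set.mem_Ioo.2 ⟨by linarith, hr0⟩) ?_ hmem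
  · have h := (hasDerivAt_pow (2 * k) y).const_mul (cb k)
    refine h.congr_deriv ?_
    push_cast
    ring_nf
  · have hy' : |y| ≤ r := le_of_lt (abs_lt.2 ⟨hy.1, hy.2⟩)
    rw [Real.norm_eq_abs, abs_mul, abs_mul, abs_of_pos (cb_pos k), abs_pow]
    have h1 : |y| ^ (2*k-1) ≤ r ^ (2*k-1) := pow_le_pow_left₀ (abs_nonneg y) hy' _
    have h2 : |(2 * (k:ℕ) : ℝ)| = 2 * (k:ℝ) := by
      rw [abs_of_nonneg (by positivity)]
    calc cb k * |(2 * (k:ℕ) : ℝ)| * |y| ^ (2*k-1)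
        ≤ 1 * (2 * (k:ℝ)) * r ^ (2*k-1) := by
          rw [h2]
          apply mul_le_mul (by nlinarith [cb_le_one k, cb_pos k, Nat.cast_nonneg (α := ℝ) k])
            h1 (by positivity) (by positivity)
      _ ≤ (2 * (k:ℝ) + 3) * r ^ (2*k-1) := by
          have : (0:ℝ) ≤ r ^ (2*k-1) := by positivity
          nlinarith
  · apply summable_cb_pow
    rw [abs_of_nonneg (by norm_num : (0:ℝ) ≤ 0)]; norm_num

end Stmt16Aux

namespace Stmt16Aux
open Real Filter

lemma summable_A {x : ℝ} (hx : |x| < 1) :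
    Summable (fun k => cb k * (2 * (k:ℝ) + 1) * x ^ (2 * k + 1)) :=
  summable_master hx (fun k => by
    rw [abs_mul, abs_of_pos (cb_pos k), abs_of_pos (by positivity)]
    nlinarith [cb_le_one k, cb_pos k, Nat.cast_nonneg (α := ℝ) k]) (fun k => by omega)

lemma summable_B {x : ℝ} (hx : |x| < 1) :
    Summable (fun k => cb k * x ^ (2 * k + 1)) :=
  summable_master hx (fun k => by
    rw [abs_of_pos (cb_pos k)]
    nlinarith [cb_le_one k, Nat.cast_nonneg (α := ℝ) k]) (fun k => by omega)

lemma summable_C {x : ℝ} (hx : |x| < 1) :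
    Summable (fun k => cb k * (2 * (k:ℝ) + 1) * x ^ (2 * k + 3)) :=
  summable_master hx (fun k => by
    rw [abs_mul, abs_of_pos (cb_pos k), abs_of_pos (by positivity)]
    nlinarith [cb_le_one k, cb_pos k, Nat.cast_nonneg (α := ℝ) k]) (fun k => by omega)

lemma summable_D {x : ℝ} (hx : |x| < 1) :
    Summable (fun k => cb k * (2 * (k:ℝ)) * x ^ (2 * k + 1)) :=
  summable_master hx (fun k => by
    rw [abs_mul, abs_of_pos (cb_pos k), abs_of_nonneg (by positivity)]
    nlinarith [cb_le_one k, cb_pos k, Nat.cast_nonneg (α := ℝ) k]) (fun k => by omega)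

lemma summable_V {x : ℝ} (hx : |x| < 1) :
    Summable (fun k => cb k * (2 * (k:ℝ)) * x ^ (2 * k - 1)) :=
  summable_master hx (fun k => by
    rw [abs_mul, abs_of_pos (cb_pos k), abs_of_nonneg (by positivity)]
    nlinarith [cb_le_one k, cb_pos k, Nat.cast_nonneg (α := ℝ) k])
    (fun k => by show k ≤ 2 * k - 1; omega)

lemma V_eq {x : ℝ} (hx : |x| < 1) :
    V x = ∑' k, cb k * (2 * (k:ℝ) + 1) * x ^ (2 * k + 1) := by
  rw [V, Summable.tsum_eq_zero_add (summable_V hx)]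
  simp only [Nat.cast_zero, mul_zero, zero_mul, mul_zero, zero_add]
  norm_num
  apply tsum_congr
  intro k
  have h1 : 2 * (k + 1) - 1 = 2 * k + 1 := by omega
  rw [h1]
  have := cb_succ k
  push_cast
  linear_combination x ^ (2 * k + 1) * this

lemma D_shift {x : ℝ} (hx : |x| < 1) :
    (∑' k, cb k * (2 * (k:ℝ)) * x ^ (2 * k + 1))
      = ∑' k, cb k * (2 * (k:ℝ) + 1) * x ^ (2 * k + 3) := by
  rw [Summable.tsum_eq_zero_add (summable_D hx)]
  simp only [Nat.cast_zero, mul_zero, zero_mul, zero_add]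
  apply tsum_congr
  intro k
  have h1 : 2 * (k + 1) + 1 = 2 * k + 3 := by omega
  rw [h1]
  have := cb_succ k
  push_cast
  linear_combination x ^ (2 * k + 3) * this

lemma V_identity {x : ℝ} (hx : |x| < 1) : (1 - x ^ 2) * V x = x * U x := by
  have hA := summable_A hx
  have hB := summable_B hx
  have hC := summable_C hx
  have e1 : x ^ 2 * V x = ∑' k, cb k * (2 * (k:ℝ) + 1) * x ^ (2 * k + 3) := by
    rw [V_eq hx, ← tsum_mul_left]
    apply tsum_congr; intro k; ring
  have e2 : x * U x = ∑' k, cb k * x ^ (2 * k + 1) := by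
    rw [U, ← tsum_mul_left]
    apply tsum_congr; intro k; ring
  have e3 : (∑' k, cb k * (2 * (k:ℝ) + 1) * x ^ (2 * k + 1))
      - (∑' k, cb k * x ^ (2 * k + 1))
      = ∑' k, cb k * (2 * (k:ℝ)) * x ^ (2 * k + 1) := by
    rw [← Summable.tsum_sub hA hB]
    apply tsum_congr; intro k; ring
  have e4 := D_shift hx
  calc (1 - x ^ 2) * V x = V x - x ^ 2 * V x := by ring
    _ = (∑' k, cb k * (2 * (k:ℝ) + 1) * x ^ (2 * k + 1))
        - (∑' k, cb k * (2 * (k:ℝ) + 1) * x ^ (2 * k + 3)) := by rw [e1, V_eq hx]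
    _ = ((∑' k, cb k * (2 * (k:ℝ) + 1) * x ^ (2 * k + 1))
          - (∑' k, cb k * x ^ (2 * k + 1)))
        + ((∑' k, cb k * x ^ (2 * k + 1))
          - (∑' k, cb k * (2 * (k:ℝ) + 1) * x ^ (2 * k + 3))) := by ring
    _ = (∑' k, cb k * (2 * (k:ℝ)) * x ^ (2 * k + 1))
        + ((∑' k, cb k * x ^ (2 * k + 1))
          - (∑' k, cb k * (2 * (k:ℝ) + 1) * x ^ (2 * k + 3))) := by rw [e3]
    _ = ∑' k, cb k * x ^ (2 * k + 1) := by rw [e4]; ring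
    _ = x * U x := e2.symm

lemma one_sub_sq_pos {x : ℝ} (hx : |x| < 1) : 0 < 1 - x ^ 2 := by
  nlinarith [abs_nonneg x, sq_abs x]

lemma hasDerivAt_W {x : ℝ} (hx : |x| < 1) :
    HasDerivAt (fun t => U t * Real.sqrt (1 - t ^ 2)) 0 x := by
  have hpos := one_sub_sq_pos hx
  have h1 : HasDerivAt (fun t : ℝ => 1 - t ^ 2) (-(2 * x)) x := by
    simpa using (hasDerivAt_pow 2 x).const_sub 1
  have h2 : HasDerivAt (fun t : ℝ => Real.sqrt (1 - t ^ 2))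
      (1 / (2 * Real.sqrt (1 - x ^ 2)) * -(2 * x)) x :=
    (Real.hasDerivAt_sqrt hpos.ne').comp x h1
  have h3 := (hasDerivAt_U hx).mul h2
  refine h3.congr_deriv ?_
  have hs : Real.sqrt (1 - x ^ 2) > 0 := Real.sqrt_pos.2 hpos
  have hsq : Real.sqrt (1 - x ^ 2) ^ 2 = 1 - x ^ 2 := Real.sq_sqrt hpos.le
  have hiden := V_identity hx
  have goal : V x * Real.sqrt (1 - x ^ 2) * (2 * Real.sqrt (1 - x ^ 2)) = U x * (2 * x) := by
    linear_combination (2 * V x) * hsq + 2 * hiden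
  field_simp
  linarith [goal]

lemma U_zero : U 0 = 1 := by
  rw [U, tsum_eq_single 0 (fun k hk => by
    simp [zero_pow (by omega : 2 * k ≠ 0)])]
  simp [cb_zero]

lemma W_const {x : ℝ} (hx : |x| < 1) : U x * Real.sqrt (1 - x ^ 2) = 1 := by
  have key : ∀ y ∈ Set.Ioo (-1:ℝ) 1, ∀ z ∈ Set.Ioo (-1:ℝ) 1,
      U y * Real.sqrt (1 - y ^ 2) = U z * Real.sqrt (1 - z ^ 2) := by
    intro y hy z hz
    have habs : ∀ w ∈ Set.Ioo (-1:ℝ) 1, |w| < 1 := fun w hw => abs_lt.2 ⟨hw.1, hw.2⟩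
    refine (convex_Ioo (-1:ℝ) 1).is_const_of_fderivWithin_eq_zero (𝕜 := ℝ)
      (f := fun t => U t * Real.sqrt (1 - t ^ 2)) ?_ ?_ hy hz
    · intro w hw
      exact (hasDerivAt_W (habs w hw)).differentiableAt.differentiableWithinAt
    · intro w hw
      rw [fderivWithin_of_isOpen isOpen_Ioo hw]
      have := (hasDerivAt_W (habs w hw)).hasFDerivAt.fderiv
      rw [this]
      ext t
      simp
  have h0 : (0:ℝ) ∈ Set.Ioo (-1:ℝ) 1 := by norm_num
  have hx' : x ∈ Set.Ioo (-1:ℝ) 1 := abs_lt.1 hx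
  have := key x hx' 0 h0
  simpa [U_zero] using this

lemma U_eq {x : ℝ} (hx : |x| < 1) : U x = 1 / Real.sqrt (1 - x ^ 2) := by
  have hs : Real.sqrt (1 - x ^ 2) > 0 := Real.sqrt_pos.2 (one_sub_sq_pos hx)
  field_simp
  linarith [W_const hx]

lemma S_zero : S 0 = 0 := by
  rw [S]
  convert tsum_zero with k
  simp [zero_pow (by omega : 2 * k + 1 ≠ 0)]

lemma S_eq_arcsin {x : ℝ} (hx : |x| < 1) : S x = Real.arcsin x := by
  have key : ∀ y ∈ Set.Ioo (-1:ℝ) 1, ∀ z ∈ Set.Ioo (-1:ℝ) 1,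
      S y - Real.arcsin y = S z - Real.arcsin z := by
    intro y hy z hz
    have habs : ∀ w ∈ Set.Ioo (-1:ℝ) 1, |w| < 1 := fun w hw => abs_lt.2 ⟨hw.1, hw.2⟩
    have hder : ∀ w ∈ Set.Ioo (-1:ℝ) 1,
        HasDerivAt (fun t => S t - Real.arcsin t) 0 w := by
      intro w hw
      have h1 := hasDerivAt_S (habs w hw)
      have h2 := Real.hasDerivAt_arcsin (ne_of_gt hw.1) (ne_of_lt hw.2)
      have h3 := h1.sub h2
      refine h3.congr_deriv ?_
      rw [U_eq (habs w hw)]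
      ring
    refine (convex_Ioo (-1:ℝ) 1).is_const_of_fderivWithin_eq_zero (𝕜 := ℝ)
      (f := fun t => S t - Real.arcsin t) ?_ ?_ hy hz
    · intro w hw
      exact (hder w hw).differentiableAt.differentiableWithinAt
    · intro w hw
      rw [fderivWithin_of_isOpen isOpen_Ioo hw]
      rw [(hder w hw).hasFDerivAt.fderiv]
      ext t
      simp
  have h0 : (0:ℝ) ∈ Set.Ioo (-1:ℝ) 1 := by norm_num
  have hx' : x ∈ Set.Ioo (-1:ℝ) 1 := abs_lt.1 hx
  have := key x hx' 0 h0
  simp only [S_zero, Real.arcsin_zero, sub_zero] at this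
  linarith [this]

end Stmt16Aux

namespace Stmt16Aux
open Real Filter Topology

lemma tsum_as_eq : ∑' k, as k = π / 2 := by
  have hfil : (𝓝[Set.Ioo (-1:ℝ) 1] 1).NeBot :=
    right_nhdsWithin_Ioo_neBot (by norm_num : (-1:ℝ) < 1)
  have T1 : Tendsto S (𝓝[Set.Ioo (-1:ℝ) 1] 1) (𝓝 (∑' k, as k)) := by
    have := tendsto_tsum_of_dominated_convergence (𝓕 := 𝓝[Set.Ioo (-1:ℝ) 1] 1)
      (f := fun x k => as k * x ^ (2 * k + 1)) (g := fun k => as k)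
      (bound := fun k => as k) summable_as
      (fun k => by
        have hc : Tendsto (fun x : ℝ => as k * x ^ (2 * k + 1)) (𝓝 1)
            (𝓝 (as k * 1 ^ (2 * k + 1))) :=
          (continuous_const.mul (continuous_pow _)).tendsto 1
        simpa using hc.mono_left nhdsWithin_le_nhds)
      (by
        filter_upwards [self_mem_nhdsWithin] with x hx k
        have hx1 : |x| ≤ 1 := le_of_lt (abs_lt.2 ⟨hx.1, hx.2⟩)
        rw [Real.norm_eq_abs, abs_mul, abs_of_pos (as_pos k), abs_pow]
        calc as k * |x| ^ (2*k+1) ≤ as k * 1 ^ (2*k+1) :=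
              mul_le_mul_of_nonneg_left (pow_le_pow_left₀ (abs_nonneg x) hx1 _) (as_pos k).le
          _ = as k := by simp)
    exact this
  have T2 : Tendsto S (𝓝[Set.Ioo (-1:ℝ) 1] 1) (𝓝 (π / 2)) := by
    have harc : Tendsto Real.arcsin (𝓝[Set.Ioo (-1:ℝ) 1] 1) (𝓝 (π / 2)) := by
      have := Real.continuous_arcsin.tendsto 1
      rw [Real.arcsin_one] at this
      exact this.mono_left nhdsWithin_le_nhds
    refine harc.congr' ?_
    filter_upwards [self_mem_nhdsWithin] with x hx
    exact (S_eq_arcsin (abs_lt.2 ⟨hx.1, hx.2⟩)).symm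
  exact tendsto_nhds_unique T1 T2

lemma hasSum_arcsin {x : ℝ} (hx : |x| ≤ 1) :
    HasSum (fun k => as k * x ^ (2 * k + 1)) (Real.arcsin x) := by
  rcases lt_or_eq_of_le hx with h | h
  · have := (summable_as_pow x hx).hasSum
    rwa [show (∑' k, as k * x ^ (2*k+1)) = Real.arcsin x from S_eq_arcsin h] at this
  · have hx1 : x = 1 ∨ x = -1 := by
      rcases abs_eq (by norm_num : (0:ℝ) ≤ 1) |>.1 h with h1 | h1
      · exact Or.inl h1
      · exact Or.inr h1
    have hs : HasSum as (π / 2) := by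
      have := summable_as.hasSum
      rwa [tsum_as_eq] at this
    rcases hx1 with rfl | rfl
    · simpa [Real.arcsin_one] using hs
    · have hneg := hs.neg
      have heq : (fun k => -as k) = fun k => as k * (-1:ℝ) ^ (2 * k + 1) := by
        funext k
        rw [Odd.neg_one_pow ⟨k, by ring⟩]
        ring
      rw [heq] at hneg
      simpa [Real.arcsin_neg, Real.arcsin_one] using hneg

end Stmt16Aux

namespace Stmt16Aux
open Real

variable {n d : ℕ}

/-- Concrete `m`-th tensor power feature map. -/
noncomputable def T (d m : ℕ) (v : EuclideanSpace ℝ (Fin d)) : (Fin m → Fin d) → ℝ :=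
  fun f => ∏ t, v (f t)

lemma sum_T_mul_T (m : ℕ) (u v : EuclideanSpace ℝ (Fin d)) :
    ∑ f : Fin m → Fin d, T d m u f * T d m v f = (inner ℝ u v : ℝ) ^ m := by
  have h1 : ∀ f : Fin m → Fin d, T d m u f * T d m v f = ∏ t, (u (f t) * v (f t)) := by
    intro f; rw [T, T, ← Finset.prod_mul_distrib]
  simp_rw [h1]
  have h2 := Fintype.prod_sum (f := fun (_ : Fin m) (j : Fin d) => u j * v j)
  rw [← h2, Finset.prod_const]
  have h3 : (inner ℝ u v : ℝ) = ∑ j, u j * v j := by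
    simp [PiLp.inner_apply, RCLike.inner_apply, mul_comm]
  rw [h3]
  simp

/-- Quadratic form of the entrywise `m`-th power of the Gram matrix. -/
noncomputable def Q (m : ℕ) (h : Fin n → EuclideanSpace ℝ (Fin d)) (z : Fin n → ℝ) : ℝ :=
  ∑ i, ∑ j, z i * z j * (inner ℝ (h i) (h j) : ℝ) ^ m

lemma Q_eq (m : ℕ) (h : Fin n → EuclideanSpace ℝ (Fin d)) (z : Fin n → ℝ) :
    Q m h z = ∑ f : Fin m → Fin d, (∑ i, z i * T d m (h i) f) ^ 2 := by
  rw [Q]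
  have h1 : ∀ f : Fin m → Fin d, (∑ i, z i * T d m (h i) f) ^ 2
      = ∑ i, ∑ j, z i * z j * (T d m (h i) f * T d m (h j) f) := by
    intro f
    rw [sq, Finset.sum_mul_sum]
    apply Finset.sum_congr rfl; intro i _
    apply Finset.sum_congr rfl; intro j _
    ring
  simp_rw [h1]
  conv_rhs => rw [Finset.sum_comm]
  apply Finset.sum_congr rfl; intro i _
  conv_rhs => rw [Finset.sum_comm]
  apply Finset.sum_congr rfl; intro j _
  rw [← Finset.mul_sum, sum_T_mul_T]

lemma Q_nonneg (m : ℕ) (h : Fin n → EuclideanSpace ℝ (Fin d)) (z : Fin n → ℝ) :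
    0 ≤ Q m h z := by
  rw [Q_eq]
  exact Finset.sum_nonneg fun f _ => sq_nonneg _

lemma cs_Q (m : ℕ) (h : Fin n → EuclideanSpace ℝ (Fin d)) (z : Fin n → ℝ)
    (β : EuclideanSpace ℝ (Fin d)) :
    (∑ i, z i * (inner ℝ (h i) β : ℝ) ^ m) ^ 2 ≤ Q m h z * ‖β‖ ^ (2 * m) := by
  have h1 : (∑ i, z i * (inner ℝ (h i) β : ℝ) ^ m)
      = ∑ f : Fin m → Fin d, (∑ i, z i * T d m (h i) f) * T d m β f := by
    have : ∀ i, z i * (inner ℝ (h i) β : ℝ) ^ m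
        = ∑ f : Fin m → Fin d, z i * (T d m (h i) f * T d m β f) := by
      intro i
      rw [← Finset.mul_sum, sum_T_mul_T]
    simp_rw [this]
    rw [Finset.sum_comm]
    apply Finset.sum_congr rfl; intro f _
    rw [Finset.sum_mul]
    apply Finset.sum_congr rfl; intro i _
    ring
  rw [h1]
  calc (∑ f : Fin m → Fin d, (∑ i, z i * T d m (h i) f) * T d m β f) ^ 2
      ≤ (∑ f : Fin m → Fin d, (∑ i, z i * T d m (h i) f) ^ 2)
        * ∑ f : Fin m → Fin d, T d m β f ^ 2 :=
        Finset.sum_mul_sq_le_sq_mul_sq _ _ _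
    _ = Q m h z * ‖β‖ ^ (2 * m) := by
        rw [← Q_eq]
        congr 1
        have : ∀ f : Fin m → Fin d, T d m β f ^ 2 = T d m β f * T d m β f := fun f => sq _
        simp_rw [this]
        rw [sum_T_mul_T, real_inner_self_eq_norm_sq, ← pow_mul]

end Stmt16Aux

namespace Stmt16Aux
open Real

lemma inv_as_le (k : ℕ) : 1 / as k ≤ (2 * (k:ℝ) + 1) ^ 2 := by
  have hcbp := cb_pos k
  have hBp : (0:ℝ) < (Nat.centralBinom k : ℝ) := by exact_mod_cast Nat.centralBinom_pos k
  have hk1 : (0:ℝ) < 2 * k + 1 := by positivity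
  have hkey : (4:ℝ) ^ k ≤ (2 * k + 1) * (Nat.centralBinom k : ℝ) := by
    rcases Nat.eq_zero_or_pos k with rfl | hk
    · simp [Nat.centralBinom]
    · have h1 := Nat.four_pow_le_two_mul_self_mul_centralBinom k hk
      have h2 : ((4:ℕ) ^ k : ℝ) ≤ ((2 * k * Nat.centralBinom k : ℕ) : ℝ) := by
        exact_mod_cast h1
      push_cast at h2
      nlinarith [hBp]
  have h1 : 1 / as k = (2 * (k:ℝ) + 1) * 4 ^ k / (Nat.centralBinom k : ℝ) := by
    rw [as, cb]
    field_simp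
  rw [h1, div_le_iff₀ hBp]
  nlinarith [hkey, hk1]

end Stmt16Aux




open Matrix Real

theorem stmt_16 (n d : ℕ) (h : Fin n → EuclideanSpace ℝ (Fin d))
    (hunit : ∀ i, ‖h i‖ = 1)
    (Θ' : Matrix (Fin n) (Fin n) ℝ)
    (hΘ'def : Θ' = Matrix.of fun i j =>
        (inner ℝ (h i) (h j) : ℝ)
          * (π - Real.arccos (inner ℝ (h i) (h j) : ℝ)) / (2 * π))
    (hΘ' : Θ'.PosDef)
    (B : Matrix (Fin n) (Fin n) ℝ) (hB : B.PosSemidef)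
    (Θ : Matrix (Fin n) (Fin n) ℝ) (hΘ : Θ = Θ' + B)
    (L : ℕ) (hL : 1 ≤ L)
    (α : ℕ → ℝ) (β : ℕ → EuclideanSpace ℝ (Fin d))
    (y : Fin n → ℝ)
    (hy : ∀ i, y i = α 1 * (inner ℝ (h i) (β 1) : ℝ)
        + ∑ l ∈ Finset.Icc 1 L, α (2 * l) * (inner ℝ (h i) (β (2 * l)) : ℝ) ^ (2 * l)) :
    Real.sqrt (y ⬝ᵥ Θ⁻¹ *ᵥ y)
      ≤ 2 * |α 1| * ‖β 1‖
        + ∑ l ∈ Finset.Icc 1 L,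
            Real.sqrt (2 * π) * (2 * (l : ℝ) - 1) * |α (2 * l)| * ‖β (2 * l)‖ ^ (2 * l) := by
  classical
  have hπ : (0:ℝ) < π := Real.pi_pos
  have hΘpd : Θ.PosDef := by rw [hΘ]; exact hΘ'.add_posSemidef hB
  have hdet : IsUnit Θ.det := (Matrix.isUnit_iff_isUnit_det Θ).1 hΘpd.isUnit
  set z : Fin n → ℝ := Θ⁻¹ *ᵥ y with hzdef
  have hΘz : Θ *ᵥ z = y := by
    rw [hzdef, Matrix.mulVec_mulVec, Matrix.mul_nonsing_inv _ hdet, Matrix.one_mulVec]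
  set q : ℝ := y ⬝ᵥ Θ⁻¹ *ᵥ y with hqdef
  have hqz : q = z ⬝ᵥ y := by rw [hqdef, ← hzdef, dotProduct_comm]
  have hq2 : z ⬝ᵥ Θ *ᵥ z = q := by rw [hΘz, hqz]
  have hq0 : 0 ≤ q := by
    rw [← hq2]
    simpa using hΘpd.posSemidef.dotProduct_mulVec_nonneg z
  have quad : ∀ M : Matrix (Fin n) (Fin n) ℝ,
      z ⬝ᵥ M *ᵥ z = ∑ i, ∑ j, z i * z j * M i j := by
    intro M
    simp only [dotProduct, Matrix.mulVec, Finset.mul_sum]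
    exact Finset.sum_congr rfl fun i _ => Finset.sum_congr rfl fun j _ => by ring
  set ρ : Fin n → Fin n → ℝ := fun i j => (inner ℝ (h i) (h j) : ℝ) with hρdef
  have hρ1 : ∀ i j, |ρ i j| ≤ 1 := fun i j => by
    have := abs_real_inner_le_norm (h i) (h j)
    rwa [hunit i, hunit j, one_mul] at this
  have hQnn : ∀ m, 0 ≤ Stmt16Aux.Q m h z := fun m => Stmt16Aux.Q_nonneg m h z
  set AQ : ℝ := ∑ i, ∑ j, z i * z j * (ρ i j * Real.arcsin (ρ i j)) with hAQdef
  have hAQsum : HasSum (fun k => Stmt16Aux.as k * Stmt16Aux.Q (2*k+2) h z) AQ := by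
    have hij : ∀ i j : Fin n, HasSum
        (fun k => z i * z j * (Stmt16Aux.as k * ρ i j ^ (2*k+2)))
        (z i * z j * (ρ i j * Real.arcsin (ρ i j))) := by
      intro i j
      have h1 := (Stmt16Aux.hasSum_arcsin (hρ1 i j)).mul_left (z i * z j * ρ i j)
      have heq : (fun k => z i * z j * ρ i j * (Stmt16Aux.as k * ρ i j ^ (2*k+1)))
          = fun k => z i * z j * (Stmt16Aux.as k * ρ i j ^ (2*k+2)) := by
        funext k; ring
      rw [show z i * z j * (ρ i j * Real.arcsin (ρ i j))
          = z i * z j * ρ i j * Real.arcsin (ρ i j) by ring, ← heq]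
      exact h1
    have h2 : HasSum (fun k => ∑ i, ∑ j, z i * z j * (Stmt16Aux.as k * ρ i j ^ (2*k+2)))
        AQ := hasSum_sum (fun i _ => hasSum_sum (fun j _ => hij i j))
    have hfun : (fun k => Stmt16Aux.as k * Stmt16Aux.Q (2*k+2) h z)
        = fun k => ∑ i, ∑ j, z i * z j * (Stmt16Aux.as k * ρ i j ^ (2*k+2)) := by
      funext k
      rw [Stmt16Aux.Q, Finset.mul_sum]
      refine Finset.sum_congr rfl fun i _ => ?_
      rw [Finset.mul_sum]
      exact Finset.sum_congr rfl fun j _ => by rw [hρdef]; ring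
    rw [hfun]
    exact h2
  have htermnn : ∀ k : ℕ, 0 ≤ Stmt16Aux.as k * Stmt16Aux.Q (2*k+2) h z :=
    fun k => mul_nonneg (Stmt16Aux.as_pos k).le (hQnn _)
  have hAQ0 : 0 ≤ AQ := by
    simpa using sum_le_hasSum (∅ : Finset ℕ) (fun k _ => htermnn k) hAQsum
  have hterm : ∀ k, Stmt16Aux.as k * Stmt16Aux.Q (2*k+2) h z ≤ AQ := fun k =>
    le_hasSum hAQsum k (fun j _ => htermnn j)
  have hform : z ⬝ᵥ Θ' *ᵥ z = (1/4) * Stmt16Aux.Q 1 h z + (1/(2*π)) * AQ := by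
    rw [quad Θ', hΘ'def]
    have hpt : ∀ i j, z i * z j * (ρ i j * (π - Real.arccos (ρ i j)) / (2*π))
        = (1/4) * (z i * z j * ρ i j ^ 1)
          + (1/(2*π)) * (z i * z j * (ρ i j * Real.arcsin (ρ i j))) := by
      intro i j
      rw [Real.arccos_eq_pi_div_two_sub_arcsin]
      field_simp
      ring
    simp only [Matrix.of_apply]
    rw [hAQdef, Stmt16Aux.Q, Finset.mul_sum, Finset.mul_sum, ← Finset.sum_add_distrib]
    refine Finset.sum_congr rfl fun i _ => ?_
    rw [Finset.mul_sum, Finset.mul_sum, ← Finset.sum_add_distrib]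
    exact Finset.sum_congr rfl fun j _ => hpt i j
  have hBz : 0 ≤ z ⬝ᵥ B *ᵥ z := by simpa using hB.dotProduct_mulVec_nonneg z
  have hΘ'q : z ⬝ᵥ Θ' *ᵥ z ≤ q := by
    rw [← hq2, hΘ, Matrix.add_mulVec, dotProduct_add]
    linarith
  have hAQpos : 0 ≤ (1/(2*π)) * AQ := mul_nonneg (by positivity) hAQ0
  have hc1 : (1/4) * Stmt16Aux.Q 1 h z ≤ q := by
    have := hform
    linarith
  have hck : ∀ k : ℕ, (Stmt16Aux.as k / (2*π)) * Stmt16Aux.Q (2*k+2) h z ≤ q := by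
    intro k
    have h1 : (Stmt16Aux.as k / (2*π)) * Stmt16Aux.Q (2*k+2) h z
        = (1/(2*π)) * (Stmt16Aux.as k * Stmt16Aux.Q (2*k+2) h z) := by ring
    have h2 : (1/(2*π)) * (Stmt16Aux.as k * Stmt16Aux.Q (2*k+2) h z)
        ≤ (1/(2*π)) * AQ :=
      mul_le_mul_of_nonneg_left (hterm k) (by positivity)
    have h3 : 0 ≤ (1/4) * Stmt16Aux.Q 1 h z := by
      have := hQnn 1; linarith
    rw [h1]
    linarith [hform, hΘ'q]
  have hCS : ∀ (m : ℕ) (β' : EuclideanSpace ℝ (Fin d)) (c : ℝ), 0 < c →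
      c * Stmt16Aux.Q m h z ≤ q →
      |∑ i, z i * (inner ℝ (h i) β' : ℝ) ^ m|
        ≤ Real.sqrt q * (‖β'‖ ^ m / Real.sqrt c) := by
    intro m β' c hc hcq
    have h1 := Stmt16Aux.cs_Q m h z β'
    have h2 : |∑ i, z i * (inner ℝ (h i) β' : ℝ) ^ m|
        ≤ Real.sqrt (Stmt16Aux.Q m h z) * ‖β'‖ ^ m := by
      have hs := Real.sqrt_le_sqrt h1
      rwa [Real.sqrt_sq_eq_abs, Real.sqrt_mul (hQnn m),
        show (2*m) = m*2 by ring, pow_mul, Real.sqrt_sq (by positivity)] at hs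
    have h3 : Real.sqrt (Stmt16Aux.Q m h z) ≤ Real.sqrt q / Real.sqrt c := by
      rw [← Real.sqrt_div hq0 c]
      apply Real.sqrt_le_sqrt
      rw [le_div_iff₀ hc]
      linarith [hcq]
    calc |∑ i, z i * (inner ℝ (h i) β' : ℝ) ^ m|
        ≤ Real.sqrt (Stmt16Aux.Q m h z) * ‖β'‖ ^ m := h2
      _ ≤ (Real.sqrt q / Real.sqrt c) * ‖β'‖ ^ m :=
          mul_le_mul_of_nonneg_right h3 (by positivity)
      _ = Real.sqrt q * (‖β'‖ ^ m / Real.sqrt c) := by ring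
  have hq_eq : q = α 1 * (∑ i, z i * (inner ℝ (h i) (β 1) : ℝ) ^ 1)
      + ∑ l ∈ Finset.Icc 1 L,
          α (2*l) * (∑ i, z i * (inner ℝ (h i) (β (2*l)) : ℝ) ^ (2*l)) := by
    rw [hqz, dotProduct]
    simp only [hy, mul_add, Finset.mul_sum]
    rw [Finset.sum_add_distrib]
    congr 1
    · exact Finset.sum_congr rfl fun i _ => by ring
    · rw [Finset.sum_comm]
      refine Finset.sum_congr rfl fun l _ => ?_
      exact Finset.sum_congr rfl fun i _ => by ring
  have hb1 : |α 1 * (∑ i, z i * (inner ℝ (h i) (β 1) : ℝ) ^ 1)|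
      ≤ Real.sqrt q * (2 * |α 1| * ‖β 1‖) := by
    rw [abs_mul]
    have hcp : (0:ℝ) < 1/4 := by norm_num
    have hcs := hCS 1 (β 1) (1/4) hcp hc1
    have hsq : Real.sqrt (1/4 : ℝ) = 1/2 := by
      rw [show (1/4:ℝ) = (1/2)^2 by norm_num, Real.sqrt_sq (by norm_num)]
    rw [hsq] at hcs
    calc |α 1| * |∑ i, z i * (inner ℝ (h i) (β 1) : ℝ) ^ 1|
        ≤ |α 1| * (Real.sqrt q * (‖β 1‖ ^ 1 / (1/2))) :=
          mul_le_mul_of_nonneg_left hcs (abs_nonneg _)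
      _ = Real.sqrt q * (2 * |α 1| * ‖β 1‖) := by rw [pow_one]; ring
  have hbl : ∀ l ∈ Finset.Icc 1 L,
      |α (2*l) * (∑ i, z i * (inner ℝ (h i) (β (2*l)) : ℝ) ^ (2*l))|
      ≤ Real.sqrt q
          * (Real.sqrt (2*π) * (2*(l:ℝ)-1) * |α (2*l)| * ‖β (2*l)‖ ^ (2*l)) := by
    intro l hl
    have hl1 : 1 ≤ l := (Finset.mem_Icc.1 hl).1
    set k := l - 1 with hk
    have hlk : l = k + 1 := by omega
    have hm : 2 * l = 2 * k + 2 := by omega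
    have hcpos : 0 < Stmt16Aux.as k / (2*π) :=
      div_pos (Stmt16Aux.as_pos k) (by positivity)
    have hcs := hCS (2*l) (β (2*l)) (Stmt16Aux.as k / (2*π)) hcpos
      (by rw [hm]; exact hck k)
    rw [abs_mul]
    have hinv : Real.sqrt ((Stmt16Aux.as k / (2*π))⁻¹)
        ≤ Real.sqrt (2*π) * (2*(k:ℝ)+1) := by
      have e1 : (Stmt16Aux.as k / (2*π))⁻¹ = (2*π) * (1 / Stmt16Aux.as k) := by
        field_simp
      rw [e1, Real.sqrt_mul (by positivity)]
      refine mul_le_mul_of_nonneg_left ?_ (Real.sqrt_nonneg _)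
      calc Real.sqrt (1 / Stmt16Aux.as k) ≤ Real.sqrt ((2*(k:ℝ)+1)^2) :=
          Real.sqrt_le_sqrt (Stmt16Aux.inv_as_le k)
        _ = 2*(k:ℝ)+1 := Real.sqrt_sq (by positivity)
    have hlcast : (l:ℝ) = (k:ℝ) + 1 := by rw [hlk]; push_cast; ring
    have hstep : ‖β (2*l)‖ ^ (2*l) / Real.sqrt (Stmt16Aux.as k / (2*π))
        ≤ Real.sqrt (2*π) * (2*(l:ℝ)-1) * ‖β (2*l)‖ ^ (2*l) := by
      rw [div_eq_mul_inv, ← Real.sqrt_inv]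
      calc ‖β (2*l)‖ ^ (2*l) * Real.sqrt ((Stmt16Aux.as k / (2*π))⁻¹)
          ≤ ‖β (2*l)‖ ^ (2*l) * (Real.sqrt (2*π) * (2*(k:ℝ)+1)) :=
            mul_le_mul_of_nonneg_left hinv (by positivity)
        _ = Real.sqrt (2*π) * (2*(l:ℝ)-1) * ‖β (2*l)‖ ^ (2*l) := by
            rw [hlcast]; ring
    calc |α (2*l)| * |∑ i, z i * (inner ℝ (h i) (β (2*l)) : ℝ) ^ (2*l)|
        ≤ |α (2*l)| * (Real.sqrt q
            * (‖β (2*l)‖ ^ (2*l) / Real.sqrt (Stmt16Aux.as k / (2*π)))) :=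
          mul_le_mul_of_nonneg_left hcs (abs_nonneg _)
      _ ≤ |α (2*l)| * (Real.sqrt q
            * (Real.sqrt (2*π) * (2*(l:ℝ)-1) * ‖β (2*l)‖ ^ (2*l))) := by
          refine mul_le_mul_of_nonneg_left ?_ (abs_nonneg _)
          exact mul_le_mul_of_nonneg_left hstep (Real.sqrt_nonneg _)
      _ = Real.sqrt q
            * (Real.sqrt (2*π) * (2*(l:ℝ)-1) * |α (2*l)| * ‖β (2*l)‖ ^ (2*l)) := by
          ring
  have hD0 : 0 ≤ 2 * |α 1| * ‖β 1‖
      + ∑ l ∈ Finset.Icc 1 L,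
          Real.sqrt (2 * π) * (2 * (l : ℝ) - 1) * |α (2 * l)| * ‖β (2 * l)‖ ^ (2 * l) := by
    refine add_nonneg (by positivity) (Finset.sum_nonneg fun l hl => ?_)
    have hl1 : 1 ≤ l := (Finset.mem_Icc.1 hl).1
    have hlr : (1:ℝ) ≤ (l:ℝ) := by exact_mod_cast hl1
    have h21 : (0:ℝ) ≤ 2*(l:ℝ)-1 := by linarith
    exact mul_nonneg (mul_nonneg (mul_nonneg (Real.sqrt_nonneg _) h21) (abs_nonneg _))
      (by positivity)
  have hqD : q ≤ Real.sqrt q * (2 * |α 1| * ‖β 1‖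
      + ∑ l ∈ Finset.Icc 1 L,
          Real.sqrt (2 * π) * (2 * (l : ℝ) - 1) * |α (2 * l)| * ‖β (2 * l)‖ ^ (2 * l)) := by
    calc q ≤ |q| := le_abs_self q
      _ = |α 1 * (∑ i, z i * (inner ℝ (h i) (β 1) : ℝ) ^ 1)
          + ∑ l ∈ Finset.Icc 1 L,
              α (2*l) * (∑ i, z i * (inner ℝ (h i) (β (2*l)) : ℝ) ^ (2*l))| := by
          rw [← hq_eq]
      _ ≤ |α 1 * (∑ i, z i * (inner ℝ (h i) (β 1) : ℝ) ^ 1)|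
          + ∑ l ∈ Finset.Icc 1 L,
              |α (2*l) * (∑ i, z i * (inner ℝ (h i) (β (2*l)) : ℝ) ^ (2*l))| :=
          (abs_add_le _ _).trans
            (add_le_add_right (Finset.abs_sum_le_sum_abs _ _) _)
      _ ≤ Real.sqrt q * (2 * |α 1| * ‖β 1‖)
          + ∑ l ∈ Finset.Icc 1 L, Real.sqrt q
              * (Real.sqrt (2*π) * (2*(l:ℝ)-1) * |α (2*l)| * ‖β (2*l)‖ ^ (2*l)) :=
          add_le_add hb1 (Finset.sum_le_sum hbl)
      _ = Real.sqrt q * (2 * |α 1| * ‖β 1‖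
          + ∑ l ∈ Finset.Icc 1 L,
              Real.sqrt (2 * π) * (2 * (l : ℝ) - 1) * |α (2 * l)| * ‖β (2 * l)‖ ^ (2 * l)) := by
          rw [mul_add, Finset.mul_sum]
  rcases eq_or_lt_of_le hq0 with h0 | h0
  · rw [← h0, Real.sqrt_zero]
    exact hD0
  · have hsq0 : 0 < Real.sqrt q := Real.sqrt_pos.2 h0
    have h2 : Real.sqrt q * Real.sqrt q ≤ Real.sqrt q * (2 * |α 1| * ‖β 1‖
        + ∑ l ∈ Finset.Icc 1 L,
            Real.sqrt (2 * π) * (2 * (l : ℝ) - 1) * |α (2 * l)| * ‖β (2 * l)‖ ^ (2 * l)) := by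
      rw [Real.mul_self_sqrt hq0]
      exact hqD
    exact le_of_mul_le_mul_left h2 hsq0
end

section
/- Let h_1, …, h_n ∈ ℝᵈ, let k ≥ 1 be a natural number, let α ∈ ℝ and β ∈ ℝᵈ, and let G be the n × n matrix with entries G_{ij} = (⟨h_i, h_j⟩)ᵏ. Assume G is positive definite. Define y ∈ ℝⁿ by y_i = α·(⟨h_i, β⟩)ᵏ. Then yᵀ G⁻¹ y ≤ α²·‖β‖^{2k}, where ‖β‖ is the Euclidean norm. -/
open Matrix

theorem stmt_17 (n d : ℕ) (h : Fin n → EuclideanSpace ℝ (Fin d))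
    (k : ℕ) (hk : 1 ≤ k) (α : ℝ) (β : EuclideanSpace ℝ (Fin d))
    (G : Matrix (Fin n) (Fin n) ℝ)
    (hG : G = Matrix.of fun i j => (inner ℝ (h i) (h j) : ℝ) ^ k)
    (hGpd : G.PosDef)
    (y : Fin n → ℝ) (hy : ∀ i, y i = α * (inner ℝ (h i) β : ℝ) ^ k) :
    y ⬝ᵥ G⁻¹ *ᵥ y ≤ α ^ 2 * ‖β‖ ^ (2 * k) := by
  classical
  set Φ : EuclideanSpace ℝ (Fin d) → EuclideanSpace ℝ (Fin k → Fin d) :=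
    fun x => WithLp.toLp 2 (fun f => ∏ j, x (f j) : (Fin k → Fin d) → ℝ) with hΦ
  have key : ∀ x z : EuclideanSpace ℝ (Fin d),
      (inner ℝ (Φ x) (Φ z) : ℝ) = (inner ℝ x z : ℝ) ^ k := by
    intro x z
    have h1 : (inner ℝ x z : ℝ) = ∑ i, x i * z i := by
      simp [PiLp.inner_apply, RCLike.inner_apply, mul_comm]
    have h2 : (inner ℝ (Φ x) (Φ z) : ℝ) = ∑ f : Fin k → Fin d, ∏ j, x (f j) * z (f j) := by
      simp [PiLp.inner_apply, RCLike.inner_apply, hΦ, Finset.prod_mul_distrib, mul_comm]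
    rw [h1, h2]
    calc (∑ f : Fin k → Fin d, ∏ j, x (f j) * z (f j))
        = ∏ _j : Fin k, ∑ i, x i * z i := by
          rw [Finset.prod_univ_sum]
          rw [Fintype.piFinset_univ]
      _ = (∑ i, x i * z i) ^ k := by simp
  set c : Fin n → ℝ := G⁻¹ *ᵥ y with hc
  have hGc : G *ᵥ c = y := by
    rw [hc, Matrix.mulVec_mulVec, Matrix.mul_nonsing_inv _ (isUnit_iff_ne_zero.2 hGpd.det_pos.ne'),
      Matrix.one_mulVec]
  set v : EuclideanSpace ℝ (Fin k → Fin d) := ∑ i, c i • Φ (h i) with hv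
  set w : EuclideanSpace ℝ (Fin k → Fin d) := α • Φ β with hw
  have hvw : (inner ℝ v w : ℝ) = y ⬝ᵥ c := by
    rw [hv, hw, sum_inner]
    simp only [real_inner_smul_left, real_inner_smul_right]
    rw [dotProduct]
    refine Finset.sum_congr rfl fun i _ => ?_
    rw [key, hy i]; ring
  have hvv : (inner ℝ v v : ℝ) = c ⬝ᵥ (G *ᵥ c) := by
    rw [hv, sum_inner]
    rw [dotProduct]
    refine Finset.sum_congr rfl fun i _ => ?_
    rw [real_inner_smul_left, inner_sum, Matrix.mulVec, dotProduct,
      Finset.mul_sum, Finset.mul_sum]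
    refine Finset.sum_congr rfl fun j _ => ?_
    rw [real_inner_smul_right, key, hG]
    simp only [Matrix.of_apply]
    ring
  have ht : y ⬝ᵥ G⁻¹ *ᵥ y = ‖v‖ ^ 2 := by
    rw [← real_inner_self_eq_norm_sq, hvv, hGc]
    exact dotProduct_comm y c
  have ht2 : y ⬝ᵥ G⁻¹ *ᵥ y = (inner ℝ v w : ℝ) := hvw.symm
  have hwnorm : ‖w‖ ^ 2 = α ^ 2 * ‖β‖ ^ (2 * k) := by
    rw [hw, norm_smul, mul_pow]
    have hβ : ‖Φ β‖ ^ 2 = ‖β‖ ^ (2 * k) := by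
      rw [← real_inner_self_eq_norm_sq, key, real_inner_self_eq_norm_sq, ← pow_mul]
    rw [hβ, Real.norm_eq_abs, sq_abs]
  rw [ht, ← hwnorm]
  rcases eq_or_ne v 0 with hv0 | hv0
  · simp [hv0]
  · have h1 : ‖v‖ ^ 2 ≤ ‖v‖ * ‖w‖ := by
      calc ‖v‖ ^ 2 = (inner ℝ v w : ℝ) := by rw [← ht, ht2]
        _ ≤ ‖v‖ * ‖w‖ := real_inner_le_norm v w
    have hvpos : 0 < ‖v‖ := norm_pos_iff.2 hv0
    have h2 : ‖v‖ ≤ ‖w‖ := le_of_mul_le_mul_left (by rwa [pow_two] at h1) hvpos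
    exact pow_le_pow_left₀ (norm_nonneg v) h2 2
end
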